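/- arXiv:1502.04061 — 3 statements merged into one kernel-verified Lean document; each statement's English description precedes it below -/
import Mathlib

section
/- Let S_n be the number of Seymour vertices of the random tournament T_n on n vertices. There exists a constant K > 0 such that for every A > 0 and every n ≥ 2, P(|S_n − E(S_n)| ≥ A·√(n log n)) ≤ K/(A² log n). In particular, for each fixed A > 0, P(|S_n − E(S_n)| ≥ A·√(n log n)) → 0 as n → ∞. -/
/-! Model of the uniform random tournament on `n` vertices.  A sample point assigns a
Boolean to every ordered pair of vertices; only the Booleans indexed by pairs `(i, j)`
with `i < j` are consulted: the edge between `i` and `j` is oriented `i → j` iff that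
Boolean is `true`.  Since distinct unordered pairs consult distinct coordinates, under the
uniform probability measure the orientations of the edges are independent and each of the
two directions has probability `1/2`. -/

/-- The sample space for the random tournament on `n` vertices. -/
abbrev TOmega (n : ℕ) := Fin n → Fin n → Bool

/-- `tadj ω i j` : in the tournament coded by `ω`, the edge between `i` and `j`
is oriented from `i` to `j`. -/
def tadj {n : ℕ} (ω : TOmega n) (i j : Fin n) : Prop :=
  i ≠ j ∧ (if i < j then ω i j = true else ω j i = false)

/-- Uniform probability of an event. -/
noncomputable def tPr {n : ℕ} (E : Set (TOmega n)) : ℝ :=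
  (∑ ω : TOmega n, E.indicator (fun _ => (1 : ℝ)) ω) / (Fintype.card (TOmega n) : ℝ)

/-- Expectation with respect to the uniform probability measure. -/
noncomputable def tEx {n : ℕ} (f : TOmega n → ℝ) : ℝ :=
  (∑ ω : TOmega n, f ω) / (Fintype.card (TOmega n) : ℝ)

/-- The first out-neighborhood of `v`: vertices at directed distance exactly 1. -/
def tN1 {n : ℕ} (ω : TOmega n) (v : Fin n) : Set (Fin n) := {w | tadj ω v w}

/-- The second out-neighborhood of `v`: vertices at directed distance exactly 2. -/
def tN2 {n : ℕ} (ω : TOmega n) (v : Fin n) : Set (Fin n) :=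
  {w | w ≠ v ∧ ¬ tadj ω v w ∧ ∃ x, tadj ω v x ∧ tadj ω x w}

/-- `v` is a Seymour vertex of the tournament coded by `ω`. -/
def tSeymour {n : ℕ} (ω : TOmega n) (v : Fin n) : Prop :=
  (tN1 ω v).ncard ≤ (tN2 ω v).ncard

/-- The number of Seymour vertices. -/
noncomputable def tS {n : ℕ} (ω : TOmega n) : ℕ := {v | tSeymour ω v}.ncard

/-- The expected number of Seymour vertices of the random tournament on `n` vertices. -/
noncomputable def tES (n : ℕ) : ℝ := tEx (fun ω : TOmega n => (tS ω : ℝ))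

/-- The variance of the number of Seymour vertices of the random tournament on `n`
vertices. -/
noncomputable def tVarS (n : ℕ) : ℝ := tEx (fun ω : TOmega n => ((tS ω : ℝ) - tES n) ^ 2)

/-- `P(Bin(m, 1/2) ≤ x)` for a real threshold `x`:  the probability that a binomial random
variable with `m` trials and success probability `1/2` is at most `x`. -/
noncomputable def binHalfCdf (m : ℕ) (x : ℝ) : ℝ :=
  ∑ k ∈ Finset.range (m + 1), if (k : ℝ) ≤ x then (m.choose k : ℝ) * (1 / 2) ^ m else 0

section Basics
open Finset
variable {n : ℕ}

lemma tcard_pos : (0:ℝ) < (Fintype.card (TOmega n) : ℝ) := by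
  exact_mod_cast Fintype.card_pos

lemma tEx_const (c : ℝ) : tEx (fun _ : TOmega n => c) = c := by
  unfold tEx
  rw [Finset.sum_const, Finset.card_univ, nsmul_eq_mul, mul_comm, mul_div_assoc,
    div_self tcard_pos.ne', mul_one]

lemma tEx_add (f g : TOmega n → ℝ) : tEx (fun ω => f ω + g ω) = tEx f + tEx g := by
  simp [tEx, Finset.sum_add_distrib, add_div]

lemma tEx_sub (f g : TOmega n → ℝ) : tEx (fun ω => f ω - g ω) = tEx f - tEx g := by
  simp [tEx, Finset.sum_sub_distrib, sub_div]

lemma tEx_smul (c : ℝ) (f : TOmega n → ℝ) : tEx (fun ω => c * f ω) = c * tEx f := by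
  simp [tEx, ← Finset.mul_sum, mul_div_assoc]

lemma tEx_mono {f g : TOmega n → ℝ} (h : ∀ ω, f ω ≤ g ω) : tEx f ≤ tEx g := by
  unfold tEx
  have := tcard_pos (n := n)
  gcongr with ω
  exact h ω

lemma tEx_nonneg {f : TOmega n → ℝ} (h : ∀ ω, 0 ≤ f ω) : 0 ≤ tEx f := by
  apply div_nonneg (Finset.sum_nonneg fun ω _ => h ω) tcard_pos.le

lemma tEx_sum {ι : Type*} (F : Finset ι) (f : ι → TOmega n → ℝ) :
    tEx (fun ω => ∑ i ∈ F, f i ω) = ∑ i ∈ F, tEx (f i) := by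
  unfold tEx
  rw [← Finset.sum_div, Finset.sum_comm]

end Basics

section Product
variable {n : ℕ}

/-- `f` depends only on coordinates in `s`. -/
def DepOn (f : TOmega n → ℝ) (s : Set (Fin n × Fin n)) : Prop :=
  ∀ ω ω' : TOmega n, (∀ p ∈ s, ω p.1 p.2 = ω' p.1 p.2) → f ω = f ω'

lemma DepOn.mono {f : TOmega n → ℝ} {s t : Set (Fin n × Fin n)} (h : DepOn f s)
    (hst : s ⊆ t) : DepOn f t := fun ω ω' hh => h ω ω' fun p hp => hh p (hst hp)

lemma DepOn.mul {f g : TOmega n → ℝ} {s : Set (Fin n × Fin n)} (hf : DepOn f s)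
    (hg : DepOn g s) : DepOn (fun ω => f ω * g ω) s := fun ω ω' hh => by
  show f ω * g ω = f ω' * g ω'
  rw [hf ω ω' hh, hg ω ω' hh]

lemma DepOn.comp {f : TOmega n → ℝ} {s : Set (Fin n × Fin n)} (φ : ℝ → ℝ) (hf : DepOn f s) :
    DepOn (fun ω => φ (f ω)) s := fun ω ω' hh => by
  show φ (f ω) = φ (f ω')
  rw [hf ω ω' hh]

lemma DepOn.prod {ι : Type*} (F : Finset ι) (f : ι → TOmega n → ℝ)
    (s : ι → Set (Fin n × Fin n)) (h : ∀ i ∈ F, DepOn (f i) (s i)) :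
    DepOn (fun ω => ∏ i ∈ F, f i ω) (⋃ i ∈ F, s i) := fun ω ω' hh => by
  refine Finset.prod_congr rfl fun i hi => h i hi ω ω' fun p hp => hh p ?_
  exact Set.mem_biUnion hi hp

set_option maxHeartbeats 2000000 in
open Classical in
lemma tEx_mul {f g : TOmega n → ℝ} {s t : Set (Fin n × Fin n)}
    (hf : DepOn f s) (hg : DepOn g t) (hst : Disjoint s t) :
    tEx (fun ω => f ω * g ω) = tEx f * tEx g := by
  classical
  set e : TOmega n ≃ ((∀ _p : {p : Fin n × Fin n // p ∈ s}, Bool) ×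
      (∀ _p : {p : Fin n × Fin n // p ∉ s}, Bool)) :=
    (Equiv.curry (Fin n) (Fin n) Bool).symm.trans
      (Equiv.piEquivPiSubtypeProd (· ∈ s) fun _ => Bool) with he
  have heval : ∀ (a) (b) (p : Fin n × Fin n),
      (e.symm (a, b)) p.1 p.2 = if h : p ∈ s then a ⟨p, h⟩ else b ⟨p, h⟩ := by
    intro a b p
    change (Equiv.piEquivPiSubtypeProd (· ∈ s) fun _ => Bool).symm (a, b) (p.1, p.2) = _
    exact Equiv.piEquivPiSubtypeProd_symm_apply _ _ _ _
  set b0 : (∀ _p : {p : Fin n × Fin n // p ∉ s}, Bool) := fun _ => false with hb0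
  set a0 : (∀ _p : {p : Fin n × Fin n // p ∈ s}, Bool) := fun _ => false with ha0
  have hfa : ∀ a b, f (e.symm (a, b)) = f (e.symm (a, b0)) := by
    intro a b
    refine hf _ _ fun p hp => ?_
    rw [heval, heval, dif_pos hp, dif_pos hp]
  have hgb : ∀ a b, g (e.symm (a, b)) = g (e.symm (a0, b)) := by
    intro a b
    refine hg _ _ fun p hp => ?_
    have hps : p ∉ s := fun hmem => Set.disjoint_left.mp hst hmem hp
    rw [heval, heval, dif_neg hps, dif_neg hps]
  have key : ∀ h : TOmega n → ℝ, ∑ ω : TOmega n, h ω = ∑ a, ∑ b, h (e.symm (a, b)) := by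
    intro h
    rw [← e.symm.sum_comp h, Fintype.sum_prod_type]
  have hsum_fg : ∑ ω : TOmega n, f ω * g ω
      = (∑ a, f (e.symm (a, b0))) * (∑ b, g (e.symm (a0, b))) := by
    rw [key, Finset.sum_mul_sum]
    refine Finset.sum_congr rfl fun a _ => Finset.sum_congr rfl fun b _ => ?_
    rw [hfa a b, hgb a b]
  have hsum_f : ∑ ω : TOmega n, f ω
      = (∑ a, f (e.symm (a, b0)))
        * (Fintype.card (∀ _p : {p : Fin n × Fin n // p ∉ s}, Bool) : ℝ) := by
    rw [key]
    have : ∀ a, (∑ b, f (e.symm (a, b)))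
        = f (e.symm (a, b0)) * (Fintype.card (∀ _p : {p : Fin n × Fin n // p ∉ s}, Bool) : ℝ) := by
      intro a
      rw [Finset.sum_congr rfl fun b _ => hfa a b, Finset.sum_const, Finset.card_univ,
        nsmul_eq_mul, mul_comm]
    rw [Finset.sum_congr rfl fun a _ => this a, ← Finset.sum_mul]
  have hsum_g : ∑ ω : TOmega n, g ω
      = (Fintype.card (∀ _p : {p : Fin n × Fin n // p ∈ s}, Bool) : ℝ)
        * (∑ b, g (e.symm (a0, b))) := by
    rw [key]
    rw [Finset.sum_congr rfl fun a (_ : a ∈ Finset.univ) =>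
      Finset.sum_congr rfl fun b _ => hgb a b]
    rw [Finset.sum_const, Finset.card_univ, nsmul_eq_mul]
  have hcard : (Fintype.card (TOmega n) : ℝ)
      = (Fintype.card (∀ _p : {p : Fin n × Fin n // p ∈ s}, Bool) : ℝ)
        * (Fintype.card (∀ _p : {p : Fin n × Fin n // p ∉ s}, Bool) : ℝ) := by
    have h2 := Fintype.card_congr e
    rw [Fintype.card_prod] at h2
    rw [h2, Nat.cast_mul]
  have hA : (0:ℝ) < (Fintype.card (∀ _p : {p : Fin n × Fin n // p ∈ s}, Bool) : ℝ) := by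
    exact_mod_cast Fintype.card_pos
  have hB : (0:ℝ) < (Fintype.card (∀ _p : {p : Fin n × Fin n // p ∉ s}, Bool) : ℝ) := by
    exact_mod_cast Fintype.card_pos
  unfold tEx
  rw [hsum_fg, hsum_f, hsum_g, hcard, div_mul_div_comm,
    div_eq_div_iff (mul_pos hA hB).ne' (mul_pos (mul_pos hA hB) (mul_pos hA hB)).ne']
  ring

end Product

section Indicators
variable {n : ℕ}

lemma tEx_prod {ι : Type*} [DecidableEq ι] (F : Finset ι) (f : ι → TOmega n → ℝ)
    (s : ι → Set (Fin n × Fin n)) (hdep : ∀ i ∈ F, DepOn (f i) (s i))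
    (hdisj : ∀ i ∈ F, ∀ j ∈ F, i ≠ j → Disjoint (s i) (s j)) :
    tEx (fun ω => ∏ i ∈ F, f i ω) = ∏ i ∈ F, tEx (f i) := by
  classical
  induction F using Finset.cons_induction with
  | empty => simpa using tEx_const (n := n) 1
  | cons a F ha ih =>
    have step : tEx (fun ω => f a ω * ∏ i ∈ F, f i ω) = tEx (f a) * tEx (fun ω => ∏ i ∈ F, f i ω) := by
      refine tEx_mul (hdep a (Finset.mem_cons_self a F))
        (DepOn.prod F f s fun i hi => hdep i (Finset.mem_cons_of_mem hi)) ?_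
      simp only [Set.disjoint_iUnion_right]
      intro i hi
      exact hdisj a (Finset.mem_cons_self a F) i (Finset.mem_cons_of_mem hi)
        (fun h => ha (h ▸ hi))
    rw [Finset.prod_cons]
    calc tEx (fun ω => ∏ i ∈ Finset.cons a F ha, f i ω)
        = tEx (fun ω => f a ω * ∏ i ∈ F, f i ω) := by
          congr 1; funext ω; rw [Finset.prod_cons]
      _ = tEx (f a) * ∏ i ∈ F, tEx (f i) := by
          rw [step, ih (fun i hi => hdep i (Finset.mem_cons_of_mem hi))
            (fun i hi j hj hij => hdisj i (Finset.mem_cons_of_mem hi) j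
              (Finset.mem_cons_of_mem hj) hij)]

def pairSet (v w : Fin n) : Set (Fin n × Fin n) := {(v, w), (w, v)}

lemma tadj_congr {ω ω' : TOmega n} {v w : Fin n} (h1 : ω v w = ω' v w)
    (h2 : ω w v = ω' w v) : tadj ω v w ↔ tadj ω' v w := by
  unfold tadj
  by_cases h : v < w <;> simp [h, h1, h2]

open Classical in
lemma depOn_ind {P : TOmega n → Prop} [∀ ω, Decidable (P ω)] {s : Set (Fin n × Fin n)}
    (h : ∀ ω ω' : TOmega n, (∀ p ∈ s, ω p.1 p.2 = ω' p.1 p.2) → (P ω ↔ P ω')) :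
    DepOn (fun ω => if P ω then (1:ℝ) else 0) s := fun ω ω' hh => by
  show (if P ω then (1:ℝ) else 0) = (if P ω' then (1:ℝ) else 0)
  exact if_congr (h ω ω' hh) rfl rfl

open Classical in
lemma depOn_indTadj (v w : Fin n) :
    DepOn (fun ω => if tadj ω v w then (1:ℝ) else 0) (pairSet v w) := by
  refine depOn_ind fun ω ω' hh => ?_
  exact tadj_congr (hh (v, w) (by simp [pairSet])) (hh (w, v) (by simp [pairSet]))

open Classical in
lemma tEx_indTadj {v w : Fin n} (hvw : v ≠ w) :
    tEx (fun ω => if tadj ω v w then (1:ℝ) else 0) = 1 / 2 := by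
  classical
  set c : Fin n × Fin n := if v < w then (v, w) else (w, v) with hc
  have hinv : Function.Involutive
      (fun (ω : TOmega n) (i j : Fin n) => if (i, j) = c then !(ω i j) else ω i j) := by
    intro ω
    funext i j
    by_cases h : (i, j) = c <;> simp [h]
  set σ := hinv.toPerm with hσ
  have hflip : ∀ ω : TOmega n, tadj (σ ω) v w ↔ ¬ tadj ω v w := by
    intro ω
    unfold tadj
    by_cases h : v < w
    · have : (σ ω) v w = !(ω v w) := by
        simp [hσ, Function.Involutive.toPerm, hc, if_pos h]
      simp [h, this, hvw]
    · have : (σ ω) w v = !(ω w v) := by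
        simp [hσ, Function.Involutive.toPerm, hc, if_neg h]
      simp [h, this, hvw]
  have hsum : (∑ ω : TOmega n, (if tadj ω v w then (1:ℝ) else 0))
      = ∑ ω : TOmega n, (1 - (if tadj ω v w then (1:ℝ) else 0)) := by
    rw [← Equiv.sum_comp σ (fun ω => if tadj ω v w then (1:ℝ) else 0)]
    refine Finset.sum_congr rfl fun ω _ => ?_
    by_cases h : tadj ω v w
    · have h2 : ¬ tadj (σ ω) v w := fun hh => ((hflip ω).mp hh) h
      simp [h, h2]
    · simp [h, (hflip ω).mpr h]
  rw [Finset.sum_sub_distrib, Finset.sum_const, Finset.card_univ, nsmul_eq_mul, mul_one] at hsum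
  unfold tEx
  have hcard := tcard_pos (n := n)
  rw [eq_sub_iff_add_eq] at hsum
  rw [div_eq_iff hcard.ne']
  linarith
end Indicators

section Comb
variable {n : ℕ}

lemma tadj_asymm {ω : TOmega n} {v w : Fin n} (h : tadj ω v w) : ¬ tadj ω w v := by
  obtain ⟨hne, h1⟩ := h
  rintro ⟨hne', h2⟩
  rcases lt_or_gt_of_ne hne with hlt | hgt
  · rw [if_pos hlt] at h1
    rw [if_neg (not_lt_of_gt hlt)] at h2
    rw [h1] at h2
    simp at h2
  · rw [if_neg (not_lt_of_gt hgt)] at h1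
    rw [if_pos hgt] at h2
    rw [h2] at h1
    simp at h1

lemma tadj_total {ω : TOmega n} {v w : Fin n} (h : v ≠ w) : tadj ω v w ∨ tadj ω w v := by
  unfold tadj
  rcases lt_or_gt_of_ne h with hlt | hgt
  · rcases Bool.eq_false_or_eq_true (ω v w) with hb | hb
    · left
      exact ⟨h, by rw [if_pos hlt]; exact hb⟩
    · right
      exact ⟨h.symm, by rw [if_neg (not_lt_of_gt hlt)]; exact hb⟩
  · rcases Bool.eq_false_or_eq_true (ω w v) with hb | hb
    · right
      exact ⟨h.symm, by rw [if_pos hgt]; exact hb⟩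
    · left
      exact ⟨h, by rw [if_neg (not_lt_of_gt hgt)]; exact hb⟩

lemma tadj_ne {ω : TOmega n} {v w : Fin n} (h : tadj ω v w) : v ≠ w := h.1

/-- In-neighbourhood. -/
def tIn (ω : TOmega n) (v : Fin n) : Set (Fin n) := {w | tadj ω w v}

lemma ncard_compl_singleton (v : Fin n) : ({v}ᶜ : Set (Fin n)).ncard = n - 1 := by
  rw [Set.compl_eq_univ_diff, Set.ncard_diff (Set.subset_univ _) (Set.toFinite _),
    Set.ncard_univ, Set.ncard_singleton, Nat.card_eq_fintype_card, Fintype.card_fin]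

lemma tN1_union_tIn (ω : TOmega n) (v : Fin n) : tN1 ω v ∪ tIn ω v = ({v}ᶜ : Set (Fin n)) := by
  ext w
  simp only [Set.mem_union, Set.mem_compl_iff, Set.mem_singleton_iff]
  constructor
  · rintro (h | h)
    · exact (tadj_ne h).symm
    · exact tadj_ne h
  · intro h
    exact tadj_total (Ne.symm h)

lemma disjoint_tN1_tIn (ω : TOmega n) (v : Fin n) : Disjoint (tN1 ω v) (tIn ω v) := by
  rw [Set.disjoint_left]
  intro w h1 h2
  exact tadj_asymm h1 h2

lemma tN1_ncard_add_tIn_ncard (ω : TOmega n) (v : Fin n) :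
    (tN1 ω v).ncard + (tIn ω v).ncard = n - 1 := by
  rw [← Set.ncard_union_eq (disjoint_tN1_tIn ω v) (Set.toFinite _) (Set.toFinite _),
    tN1_union_tIn, ncard_compl_singleton]

lemma seymour_deg {ω : TOmega n} {v : Fin n} (h : tSeymour ω v) :
    2 * (tN1 ω v).ncard ≤ n - 1 := by
  have hdisj : Disjoint (tN1 ω v) (tN2 ω v) := by
    rw [Set.disjoint_left]
    intro w h1 h2
    exact h2.2.1 h1
  have hsub : tN1 ω v ∪ tN2 ω v ⊆ ({v}ᶜ : Set (Fin n)) := by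
    rintro w (hw | hw)
    · exact fun hh => (tadj_ne hw).symm (by simpa using hh)
    · exact fun hh => hw.1 (by simpa using hh)
  have := Set.ncard_le_ncard hsub (Set.toFinite _)
  rw [Set.ncard_union_eq hdisj (Set.toFinite _) (Set.toFinite _), ncard_compl_singleton] at this
  have hS : (tN1 ω v).ncard ≤ (tN2 ω v).ncard := h
  omega

/-- `v` has an in-neighbour not reachable in two steps. -/
def tBad (ω : TOmega n) (v : Fin n) : Prop :=
  ∃ w, tadj ω w v ∧ ∀ x, ¬ (tadj ω v x ∧ tadj ω x w)

lemma seymour_of_deg_of_not_bad {ω : TOmega n} {v : Fin n}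
    (hdeg : 2 * (tN1 ω v).ncard ≤ n - 1) (hbad : ¬ tBad ω v) : tSeymour ω v := by
  unfold tBad at hbad
  push_neg at hbad
  have hsub : tIn ω v ⊆ tN2 ω v := by
    intro w hw
    obtain ⟨x, hx⟩ := hbad w hw
    exact ⟨tadj_ne hw, fun hvw => tadj_asymm hvw hw, x, hx⟩
  have h2 := Set.ncard_le_ncard hsub (Set.toFinite _)
  have h3 := tN1_ncard_add_tIn_ncard ω v
  unfold tSeymour
  omega

open Classical in
lemma ncard_cast_eq_sum (P : Fin n → Prop) :
    (({v | P v} : Set (Fin n)).ncard : ℝ) = ∑ v : Fin n, if P v then (1:ℝ) else 0 := by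
  classical
  rw [Set.ncard_eq_toFinset_card', Set.toFinset_setOf, Finset.card_filter]
  push_cast
  exact Finset.sum_congr rfl fun v _ => by split <;> norm_num

end Comb

section Cov
variable {n : ℕ}

noncomputable def thr (n : ℕ) (k : ℕ) : ℝ := if 2 * k ≤ n - 1 then 1 else 0

noncomputable def tJ {n : ℕ} (ω : TOmega n) (v : Fin n) : ℝ := thr n (tN1 ω v).ncard

lemma thr_nonneg (k : ℕ) : 0 ≤ thr n k := by unfold thr; split <;> norm_num

lemma thr_le_one (k : ℕ) : thr n k ≤ 1 := by unfold thr; split <;> norm_num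

lemma thr_succ_le (k : ℕ) : thr n (1 + k) ≤ thr n (0 + k) := by
  unfold thr
  split
  · rw [if_pos (by omega)]
  · split <;> norm_num

def uSet (v w : Fin n) : Set (Fin n × Fin n) :=
  {p | (p.1 = v ∧ p.2 ≠ v ∧ p.2 ≠ w) ∨ (p.2 = v ∧ p.1 ≠ v ∧ p.1 ≠ w)}

noncomputable def bF (v w : Fin n) (c : ℕ) (ω : TOmega n) : ℝ :=
  thr n (c + (tN1 ω v \ {w}).ncard)

lemma depOn_bF (v w : Fin n) (c : ℕ) : DepOn (bF v w c) (uSet v w) := by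
  intro ω ω' hh
  unfold bF
  have hset : tN1 ω v \ {w} = tN1 ω' v \ {w} := by
    ext x
    simp only [Set.mem_diff, Set.mem_singleton_iff, tN1, Set.mem_setOf_eq]
    by_cases hxv : x = v
    · subst hxv
      constructor <;> rintro ⟨h1, -⟩ <;> exact absurd rfl (tadj_ne h1)
    · by_cases hxw : x = w
      · subst hxw
        constructor <;> rintro ⟨-, h2⟩ <;> exact absurd rfl h2
      · have h1 := hh (v, x) (Or.inl ⟨rfl, hxv, hxw⟩)
        have h2 := hh (x, v) (Or.inr ⟨rfl, hxv, hxw⟩)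
        constructor <;> rintro ⟨ha, hb⟩
        · exact ⟨(tadj_congr h1 h2).mp ha, hb⟩
        · exact ⟨(tadj_congr h1 h2).mpr ha, hb⟩
  rw [hset]

lemma tJ_eq_adj {ω : TOmega n} {v w : Fin n} (h : tadj ω v w) : tJ ω v = bF v w 1 ω := by
  have hw : w ∈ tN1 ω v := h
  have hcard : (tN1 ω v).ncard = 1 + (tN1 ω v \ {w}).ncard := by
    rw [add_comm]
    exact (Set.ncard_diff_singleton_add_one hw (Set.toFinite _)).symm
  unfold tJ bF
  rw [hcard]

lemma tJ_eq_nadj {ω : TOmega n} {v w : Fin n} (h : ¬ tadj ω v w) : tJ ω v = bF v w 0 ω := by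
  have hset : tN1 ω v \ {w} = tN1 ω v := Set.diff_singleton_eq_self (fun hw => h hw)
  unfold tJ bF
  rw [hset, zero_add]

end Cov

section Cov2
variable {n : ℕ}

lemma disj_pair_uSet_vw {v w : Fin n} : Disjoint (pairSet v w) (uSet v w) := by
  rw [Set.disjoint_left]
  rintro p (rfl | rfl) hp <;>
    rcases hp with ⟨h1, h2, h3⟩ | ⟨h1, h2, h3⟩ <;> simp_all

lemma disj_pair_uSet_wv {v w : Fin n} (hvw : v ≠ w) : Disjoint (pairSet v w) (uSet w v) := by
  rw [Set.disjoint_left]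
  rintro p (rfl | rfl) hp <;>
    rcases hp with ⟨h1, h2, h3⟩ | ⟨h1, h2, h3⟩ <;> simp_all

lemma disj_uSet {v w : Fin n} (hvw : v ≠ w) : Disjoint (uSet v w) (uSet w v) := by
  rw [Set.disjoint_left]
  rintro ⟨p1, p2⟩ hp hq
  rcases hp with ⟨h1, h2, h3⟩ | ⟨h1, h2, h3⟩ <;>
    rcases hq with ⟨g1, g2, g3⟩ | ⟨g1, g2, g3⟩ <;> simp_all

open Classical in
lemma cov_nonpos {v w : Fin n} (hvw : v ≠ w) :
    tEx (fun ω => tJ ω v * tJ ω w) ≤ tEx (fun ω => tJ ω v) * tEx (fun ω => tJ ω w) := by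
  classical
  set indvw : TOmega n → ℝ := fun ω => if tadj ω v w then (1:ℝ) else 0 with hindvw
  set indwv : TOmega n → ℝ := fun ω => if tadj ω w v then (1:ℝ) else 0 with hindwv
  -- pointwise formulas
  have hJv : ∀ ω, tJ ω v = indvw ω * bF v w 1 ω + indwv ω * bF v w 0 ω := by
    intro ω
    by_cases h : tadj ω v w
    · rw [hindvw, hindwv]
      simp only [if_pos h, if_neg (tadj_asymm h)]
      rw [tJ_eq_adj h]; ring
    · have h' : tadj ω w v := (tadj_total hvw).resolve_left h
      rw [hindvw, hindwv]
      simp only [if_neg h, if_pos h']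
      rw [tJ_eq_nadj h]; ring
  have hJw : ∀ ω, tJ ω w = indvw ω * bF w v 0 ω + indwv ω * bF w v 1 ω := by
    intro ω
    by_cases h : tadj ω v w
    · rw [hindvw, hindwv]
      simp only [if_pos h, if_neg (tadj_asymm h)]
      rw [tJ_eq_nadj (tadj_asymm h)]; ring
    · have h' : tadj ω w v := (tadj_total hvw).resolve_left h
      rw [hindvw, hindwv]
      simp only [if_neg h, if_pos h']
      rw [tJ_eq_adj h']; ring
  have hprod : ∀ ω, tJ ω v * tJ ω w
      = indvw ω * (bF v w 1 ω * bF w v 0 ω) + indwv ω * (bF v w 0 ω * bF w v 1 ω) := by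
    intro ω
    by_cases h : tadj ω v w
    · rw [hindvw, hindwv]
      simp only [if_pos h, if_neg (tadj_asymm h)]
      rw [tJ_eq_adj h, tJ_eq_nadj (tadj_asymm h)]; ring
    · have h' : tadj ω w v := (tadj_total hvw).resolve_left h
      rw [hindvw, hindwv]
      simp only [if_neg h, if_pos h']
      rw [tJ_eq_nadj h, tJ_eq_adj h']; ring
  -- expectations
  have hEind : tEx indvw = 1/2 := tEx_indTadj hvw
  have hEind' : tEx indwv = 1/2 := tEx_indTadj hvw.symm
  have hdepvw := depOn_indTadj (n := n) v w
  have hdepwv := depOn_indTadj (n := n) w v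
  have hpair_wv : pairSet w v = pairSet v w := by
    unfold pairSet; exact Set.pair_comm _ _
  have hdepwv' : DepOn indwv (pairSet v w) := hpair_wv ▸ hdepwv
  have hEterm : ∀ c d : ℕ, tEx (fun ω => bF v w c ω * bF w v d ω)
      = tEx (bF v w c) * tEx (bF w v d) :=
    fun c d => tEx_mul (depOn_bF v w c) (depOn_bF w v d) (disj_uSet hvw)
  have hdep_prod : ∀ c d : ℕ, DepOn (fun ω => bF v w c ω * bF w v d ω) (uSet v w ∪ uSet w v) :=
    fun c d => DepOn.mul ((depOn_bF v w c).mono Set.subset_union_left)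
      ((depOn_bF w v d).mono Set.subset_union_right)
  have hdisj_pair_union : Disjoint (pairSet v w) (uSet v w ∪ uSet w v) := by
    rw [Set.disjoint_union_right]
    exact ⟨disj_pair_uSet_vw, disj_pair_uSet_wv hvw⟩
  have hmul : ∀ c d : ℕ, tEx (fun ω => indvw ω * (bF v w c ω * bF w v d ω))
      = 1/2 * (tEx (bF v w c) * tEx (bF w v d)) := by
    intro c d
    rw [tEx_mul hdepvw (hdep_prod c d) hdisj_pair_union, hEind, hEterm]
  have hmul' : ∀ c d : ℕ, tEx (fun ω => indwv ω * (bF v w c ω * bF w v d ω))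
      = 1/2 * (tEx (bF v w c) * tEx (bF w v d)) := by
    intro c d
    rw [tEx_mul hdepwv' (hdep_prod c d) hdisj_pair_union, hEind', hEterm]
  have hmulv : ∀ c : ℕ, tEx (fun ω => indvw ω * bF v w c ω) = 1/2 * tEx (bF v w c) := by
    intro c
    rw [tEx_mul hdepvw (depOn_bF v w c) disj_pair_uSet_vw, hEind]
  have hmulv' : ∀ c : ℕ, tEx (fun ω => indwv ω * bF v w c ω) = 1/2 * tEx (bF v w c) := by
    intro c
    rw [tEx_mul hdepwv' (depOn_bF v w c) disj_pair_uSet_vw, hEind']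
  have hmulw : ∀ c : ℕ, tEx (fun ω => indvw ω * bF w v c ω) = 1/2 * tEx (bF w v c) := by
    intro c
    rw [tEx_mul hdepvw (depOn_bF w v c) (disj_pair_uSet_wv hvw), hEind]
  have hmulw' : ∀ c : ℕ, tEx (fun ω => indwv ω * bF w v c ω) = 1/2 * tEx (bF w v c) := by
    intro c
    rw [tEx_mul hdepwv' (depOn_bF w v c) (disj_pair_uSet_wv hvw), hEind']
  have EJv : tEx (fun ω => tJ ω v) = 1/2 * tEx (bF v w 1) + 1/2 * tEx (bF v w 0) := by
    calc tEx (fun ω => tJ ω v)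
        = tEx (fun ω => indvw ω * bF v w 1 ω + indwv ω * bF v w 0 ω) := by
          congr 1; funext ω; exact hJv ω
      _ = _ := by rw [tEx_add, hmulv, hmulv']
  have EJw : tEx (fun ω => tJ ω w) = 1/2 * tEx (bF w v 0) + 1/2 * tEx (bF w v 1) := by
    calc tEx (fun ω => tJ ω w)
        = tEx (fun ω => indvw ω * bF w v 0 ω + indwv ω * bF w v 1 ω) := by
          congr 1; funext ω; exact hJw ω
      _ = _ := by rw [tEx_add, hmulw, hmulw']
  have Eprod : tEx (fun ω => tJ ω v * tJ ω w)
      = 1/2 * (tEx (bF v w 1) * tEx (bF w v 0)) + 1/2 * (tEx (bF v w 0) * tEx (bF w v 1)) := by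
    calc tEx (fun ω => tJ ω v * tJ ω w)
        = tEx (fun ω => indvw ω * (bF v w 1 ω * bF w v 0 ω)
            + indwv ω * (bF v w 0 ω * bF w v 1 ω)) := by
          congr 1; funext ω; exact hprod ω
      _ = _ := by rw [tEx_add, hmul 1 0, hmul' 0 1]
  -- monotonicity facts
  have hmono_v : tEx (bF v w 1) ≤ tEx (bF v w 0) :=
    tEx_mono fun ω => thr_succ_le _
  have hmono_w : tEx (bF w v 1) ≤ tEx (bF w v 0) :=
    tEx_mono fun ω => thr_succ_le _
  rw [Eprod, EJv, EJw]
  nlinarith [mul_nonneg (sub_nonneg.2 hmono_v) (sub_nonneg.2 hmono_w)]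

end Cov2

section VarX
variable {n : ℕ}

lemma tEx_sq_sub (f : TOmega n → ℝ) :
    tEx (fun ω => (f ω - tEx f) ^ 2) = tEx (fun ω => f ω ^ 2) - (tEx f) ^ 2 := by
  calc tEx (fun ω => (f ω - tEx f) ^ 2)
      = tEx (fun ω => (f ω ^ 2 - (2 * tEx f) * f ω) + (tEx f) ^ 2) := by
        congr 1; funext ω; ring
    _ = tEx (fun ω => f ω ^ 2 - (2 * tEx f) * f ω) + (tEx f) ^ 2 := by
        rw [tEx_add]
        rw [tEx_const]
    _ = tEx (fun ω => f ω ^ 2) - (2 * tEx f) * tEx f + (tEx f) ^ 2 := by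
        rw [tEx_sub, tEx_smul]
    _ = _ := by ring

lemma tJ_sq_le_one (ω : TOmega n) (v : Fin n) : tJ ω v ^ 2 ≤ 1 := by
  have h1 := thr_nonneg (n := n) (tN1 ω v).ncard
  have h2 := thr_le_one (n := n) (tN1 ω v).ncard
  unfold tJ
  nlinarith

open Classical in
lemma varX_le :
    tEx (fun ω : TOmega n => ((∑ v, tJ ω v) - tEx (fun ω : TOmega n => ∑ v, tJ ω v)) ^ 2)
      ≤ n := by
  classical
  rw [tEx_sq_sub]
  have hsq : tEx (fun ω : TOmega n => (∑ v, tJ ω v) ^ 2)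
      = ∑ v : Fin n, ∑ w : Fin n, tEx (fun ω : TOmega n => tJ ω v * tJ ω w) := by
    calc tEx (fun ω : TOmega n => (∑ v, tJ ω v) ^ 2)
        = tEx (fun ω : TOmega n => ∑ v, ∑ w, tJ ω v * tJ ω w) := by
          congr 1; funext ω
          rw [sq, Finset.sum_mul_sum]
      _ = ∑ v : Fin n, tEx (fun ω : TOmega n => ∑ w, tJ ω v * tJ ω w) := tEx_sum _ _
      _ = _ := Finset.sum_congr rfl fun v _ => tEx_sum _ _
  have hlin : (tEx (fun ω : TOmega n => ∑ v, tJ ω v)) ^ 2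
      = ∑ v : Fin n, ∑ w : Fin n,
          tEx (fun ω : TOmega n => tJ ω v) * tEx (fun ω : TOmega n => tJ ω w) := by
    rw [tEx_sum, sq, Finset.sum_mul_sum]
  rw [hsq, hlin, ← Finset.sum_sub_distrib]
  have hterm : ∀ v : Fin n,
      (∑ w : Fin n, tEx (fun ω : TOmega n => tJ ω v * tJ ω w))
        - (∑ w : Fin n, tEx (fun ω : TOmega n => tJ ω v) * tEx (fun ω : TOmega n => tJ ω w))
        ≤ 1 := by
    intro v
    rw [← Finset.sum_sub_distrib]
    have hle : ∀ w : Fin n, w ∈ Finset.univ →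
        tEx (fun ω : TOmega n => tJ ω v * tJ ω w)
          - tEx (fun ω : TOmega n => tJ ω v) * tEx (fun ω : TOmega n => tJ ω w)
          ≤ if w = v then 1 else 0 := by
      intro w _
      by_cases hwv : w = v
      · subst hwv
        rw [if_pos rfl]
        have h1 : tEx (fun ω : TOmega n => tJ ω w * tJ ω w) ≤ 1 := by
          refine (tEx_mono fun ω => ?_).trans_eq (tEx_const 1)
          have := tJ_sq_le_one ω w
          nlinarith [thr_nonneg (n := n) (tN1 ω w).ncard]
        have h2 : 0 ≤ tEx (fun ω : TOmega n => tJ ω w) := tEx_nonneg fun ω => thr_nonneg _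
        nlinarith
      · rw [if_neg hwv]
        have := cov_nonpos (n := n) (fun h => hwv (h.symm)) (v := v) (w := w)
        linarith
    calc (∑ w : Fin n, (tEx (fun ω : TOmega n => tJ ω v * tJ ω w)
            - tEx (fun ω : TOmega n => tJ ω v) * tEx (fun ω : TOmega n => tJ ω w)))
        ≤ ∑ w : Fin n, if w = v then (1:ℝ) else 0 := Finset.sum_le_sum hle
      _ = 1 := by simp
  calc (∑ v : Fin n, ((∑ w : Fin n, tEx (fun ω : TOmega n => tJ ω v * tJ ω w))
          - ∑ w : Fin n, tEx (fun ω : TOmega n => tJ ω v) * tEx (fun ω : TOmega n => tJ ω w)))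
      ≤ ∑ _v : Fin n, (1:ℝ) := Finset.sum_le_sum fun v _ => hterm v
    _ = n := by simp

end VarX

section Bad
variable {n : ℕ}

lemma pairSet_disjoint {a b c d : Fin n} (h1 : a ≠ c ∨ b ≠ d) (h2 : a ≠ d ∨ b ≠ c) :
    Disjoint (pairSet a b) (pairSet c d) := by
  rw [Set.disjoint_left]
  rintro p hp hq
  simp only [pairSet, Set.mem_insert_iff, Set.mem_singleton_iff, Prod.ext_iff] at hp hq
  rcases hp with ⟨rfl, rfl⟩ | ⟨rfl, rfl⟩ <;> rcases hq with ⟨h3, h4⟩ | ⟨h3, h4⟩ <;> tauto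

open Classical in
lemma depOn_ind' {P : TOmega n → Prop} [∀ ω, Decidable (P ω)] {s : Set (Fin n × Fin n)}
    (h : ∀ ω ω' : TOmega n, (∀ p ∈ s, ω p.1 p.2 = ω' p.1 p.2) → (P ω ↔ P ω')) :
    DepOn (fun ω => if P ω then (0:ℝ) else 1) s := fun ω ω' hh => by
  show (if P ω then (0:ℝ) else 1) = (if P ω' then (0:ℝ) else 1)
  exact if_congr (h ω ω' hh) rfl rfl

open Classical in
noncomputable def tBadInd (v : Fin n) (ω : TOmega n) : ℝ := if tBad ω v then 1 else 0

open Classical in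
lemma tEx_badInd_le (v : Fin n) :
    tEx (tBadInd v) ≤ (n : ℝ) * (3/4 : ℝ) ^ (n - 2) := by
  classical
  set G : Fin n → Fin n → TOmega n → ℝ :=
    fun w x ω => if tadj ω v x ∧ tadj ω x w then 0 else 1 with hG
  set T : Fin n → TOmega n → ℝ :=
    fun w ω => (if tadj ω w v then (1:ℝ) else 0)
      * ∏ x ∈ (Finset.univ.erase v).erase w, G w x ω with hT
  have hGnonneg : ∀ w x ω, 0 ≤ G w x ω := by
    intro w x ω; rw [hG]; dsimp only; split <;> norm_num
  have hTnonneg : ∀ w ω, 0 ≤ T w ω := by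
    intro w ω
    refine mul_nonneg (by split <;> norm_num) (Finset.prod_nonneg fun x _ => hGnonneg w x ω)
  -- pointwise bound
  have hpoint : ∀ ω, tBadInd v ω ≤ ∑ w ∈ Finset.univ.erase v, T w ω := by
    intro ω
    unfold tBadInd
    by_cases hb : tBad ω v
    · rw [if_pos hb]
      obtain ⟨w, hwv, hall⟩ := hb
      have hw : w ∈ Finset.univ.erase v := Finset.mem_erase.2 ⟨tadj_ne hwv, Finset.mem_univ w⟩
      have hT1 : T w ω = 1 := by
        rw [hT]
        dsimp only
        rw [if_pos hwv, one_mul]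
        refine Finset.prod_eq_one fun x _ => ?_
        rw [hG]
        dsimp only
        rw [if_neg (hall x)]
      calc (1:ℝ) = T w ω := hT1.symm
        _ ≤ ∑ w ∈ Finset.univ.erase v, T w ω :=
            Finset.single_le_sum (fun x _ => hTnonneg x ω) hw
    · rw [if_neg hb]
      exact Finset.sum_nonneg fun w _ => hTnonneg w ω
  -- expectation of each term
  have hTEx : ∀ w ∈ Finset.univ.erase v, tEx (T w) = 1/2 * (3/4 : ℝ) ^ (n - 2) := by
    intro w hw
    have hwv : w ≠ v := (Finset.mem_erase.1 hw).1
    have hdepG : ∀ x ∈ (Finset.univ.erase v).erase w,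
        DepOn (G w x) (pairSet v x ∪ pairSet x w) := by
      intro x hx
      have hxw : x ≠ w := (Finset.mem_erase.1 hx).1
      have hxv : x ≠ v := (Finset.mem_erase.1 (Finset.mem_erase.1 hx).2).1
      show DepOn (fun ω => if tadj ω v x ∧ tadj ω x w then (0:ℝ) else 1)
        (pairSet v x ∪ pairSet x w)
      refine depOn_ind' fun ω ω' hh => ?_
      refine and_congr
        (tadj_congr (hh (v, x) (Set.mem_union_left _ (by simp [pairSet])))
          (hh (x, v) (Set.mem_union_left _ (by simp [pairSet]))))
        (tadj_congr (hh (x, w) (Set.mem_union_right _ (by simp [pairSet])))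
          (hh (w, x) (Set.mem_union_right _ (by simp [pairSet]))))
    have hdisjG : ∀ x ∈ (Finset.univ.erase v).erase w, ∀ y ∈ (Finset.univ.erase v).erase w,
        x ≠ y → Disjoint (pairSet v x ∪ pairSet x w) (pairSet v y ∪ pairSet y w) := by
      intro x hx y hy hxy
      have hxw : x ≠ w := (Finset.mem_erase.1 hx).1
      have hxv : x ≠ v := (Finset.mem_erase.1 (Finset.mem_erase.1 hx).2).1
      have hyw : y ≠ w := (Finset.mem_erase.1 hy).1
      have hyv : y ≠ v := (Finset.mem_erase.1 (Finset.mem_erase.1 hy).2).1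
      rw [Set.disjoint_union_left]
      constructor <;> rw [Set.disjoint_union_right] <;> constructor
      · exact pairSet_disjoint (Or.inr hxy) (Or.inl (Ne.symm hyv))
      · exact pairSet_disjoint (Or.inl (Ne.symm hyv)) (Or.inr hxy)
      · exact pairSet_disjoint (Or.inl hxv) (Or.inl hxy)
      · exact pairSet_disjoint (Or.inl hxy) (Or.inl hxw)
    have hGEx : ∀ x ∈ (Finset.univ.erase v).erase w, tEx (G w x) = 3/4 := by
      intro x hx
      have hxw : x ≠ w := (Finset.mem_erase.1 hx).1
      have hxv : x ≠ v := (Finset.mem_erase.1 (Finset.mem_erase.1 hx).2).1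
      have hpt : ∀ ω, G w x ω
          = 1 - (if tadj ω v x then (1:ℝ) else 0) * (if tadj ω x w then (1:ℝ) else 0) := by
        intro ω
        rw [hG]
        dsimp only
        by_cases h1 : tadj ω v x <;> by_cases h2 : tadj ω x w <;> simp [h1, h2]
      have hprod : tEx (fun ω => (if tadj ω v x then (1:ℝ) else 0)
          * (if tadj ω x w then (1:ℝ) else 0)) = 1/2 * (1/2) := by
        rw [tEx_mul (depOn_indTadj v x) (depOn_indTadj x w)
          (pairSet_disjoint (Or.inl (Ne.symm hxv)) (Or.inl (Ne.symm hwv)))]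
        · rw [tEx_indTadj (Ne.symm hxv), tEx_indTadj hxw]
      calc tEx (G w x)
          = tEx (fun ω => 1 - (if tadj ω v x then (1:ℝ) else 0)
              * (if tadj ω x w then (1:ℝ) else 0)) := by
            congr 1; funext ω; exact hpt ω
        _ = 3/4 := by rw [tEx_sub, tEx_const, hprod]; norm_num
    have hcard : ((Finset.univ.erase v).erase w).card = n - 2 := by
      rw [Finset.card_erase_of_mem (Finset.mem_erase.2 ⟨hwv, Finset.mem_univ w⟩),
        Finset.card_erase_of_mem (Finset.mem_univ v), Finset.card_univ, Fintype.card_fin]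
      omega
    have hdep_prod : DepOn (fun ω => ∏ x ∈ (Finset.univ.erase v).erase w, G w x ω)
        (⋃ x ∈ (Finset.univ.erase v).erase w, pairSet v x ∪ pairSet x w) :=
      DepOn.prod _ _ _ hdepG
    have hdisj_pair : Disjoint (pairSet w v)
        (⋃ x ∈ (Finset.univ.erase v).erase w, pairSet v x ∪ pairSet x w) := by
      simp only [Set.disjoint_iUnion_right]
      intro x hx
      have hxw : x ≠ w := (Finset.mem_erase.1 hx).1
      have hxv : x ≠ v := (Finset.mem_erase.1 (Finset.mem_erase.1 hx).2).1
      rw [Set.disjoint_union_right]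
      exact ⟨pairSet_disjoint (Or.inl hwv) (Or.inl (Ne.symm hxw)),
        pairSet_disjoint (Or.inl (Ne.symm hxw)) (Or.inr (Ne.symm hxv))⟩
    calc tEx (T w)
        = tEx (fun ω => if tadj ω w v then (1:ℝ) else 0)
          * tEx (fun ω => ∏ x ∈ (Finset.univ.erase v).erase w, G w x ω) := by
          refine tEx_mul (depOn_indTadj w v) hdep_prod hdisj_pair
      _ = 1/2 * (3/4 : ℝ) ^ (n - 2) := by
          rw [tEx_indTadj hwv, tEx_prod _ _ _ hdepG hdisjG,
            Finset.prod_congr rfl hGEx, Finset.prod_const, hcard]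
  -- put together
  calc tEx (tBadInd v)
      ≤ tEx (fun ω => ∑ w ∈ Finset.univ.erase v, T w ω) := tEx_mono hpoint
    _ = ∑ w ∈ Finset.univ.erase v, tEx (T w) := tEx_sum _ _
    _ = ((Finset.univ.erase v).card : ℝ) * (1/2 * (3/4 : ℝ) ^ (n - 2)) := by
        rw [Finset.sum_congr rfl hTEx, Finset.sum_const, nsmul_eq_mul]
    _ ≤ (n : ℝ) * (3/4 : ℝ) ^ (n - 2) := by
        have h1 : ((Finset.univ.erase v).card : ℝ) ≤ n := by
          rw [Finset.card_erase_of_mem (Finset.mem_univ v), Finset.card_univ, Fintype.card_fin]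
          have : (n : ℝ) - 1 ≤ n := by linarith
          exact_mod_cast le_trans (by exact_mod_cast Nat.cast_le.2 (Nat.sub_le n 1)) le_rfl
        have h2 : (0:ℝ) ≤ (3/4 : ℝ) ^ (n - 2) := by positivity
        nlinarith
end Bad

section Fin1
variable {n : ℕ}

open Classical in
lemma indSey_le_tJ (ω : TOmega n) (v : Fin n) :
    (if tSeymour ω v then (1:ℝ) else 0) ≤ tJ ω v := by
  by_cases h : tSeymour ω v
  · rw [if_pos h]
    unfold tJ thr
    rw [if_pos (seymour_deg h)]
  · rw [if_neg h]
    exact thr_nonneg _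

open Classical in
lemma tJ_le_indSey_add (ω : TOmega n) (v : Fin n) :
    tJ ω v ≤ (if tSeymour ω v then (1:ℝ) else 0) + tBadInd v ω := by
  unfold tJ thr tBadInd
  by_cases hd : 2 * (tN1 ω v).ncard ≤ n - 1
  · rw [if_pos hd]
    by_cases hb : tBad ω v
    · rw [if_pos hb]
      have : (0:ℝ) ≤ if tSeymour ω v then (1:ℝ) else 0 := by split <;> norm_num
      linarith
    · rw [if_pos (seymour_of_deg_of_not_bad hd hb), if_neg hb]
      norm_num
  · rw [if_neg hd]
    have h1 : (0:ℝ) ≤ if tSeymour ω v then (1:ℝ) else 0 := by split <;> norm_num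
    have h2 : (0:ℝ) ≤ if tBad ω v then (1:ℝ) else 0 := by split <;> norm_num
    linarith

lemma geom_bound : ∃ C : ℝ, 0 < C ∧ ∀ m : ℕ, (m:ℝ)^2 * (3/4:ℝ)^(m - 2) ≤ C := by
  have hsum : Summable (fun m : ℕ => (m:ℝ)^2 * (3/4:ℝ)^m) := by
    have := summable_pow_mul_geometric_of_norm_lt_one (R := ℝ) 2 (r := 3/4)
      (by rw [Real.norm_eq_abs]; rw [abs_of_nonneg] <;> norm_num)
    simpa using this
  set Cb := ∑' m : ℕ, (m:ℝ)^2 * (3/4:ℝ)^m with hCb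
  have hterm : ∀ m : ℕ, (m:ℝ)^2 * (3/4:ℝ)^m ≤ Cb :=
    fun m => Summable.le_tsum hsum m fun j _ => by positivity
  refine ⟨16/9 * Cb + 1, ?_, ?_⟩
  · have := hterm 1
    norm_num at this
    nlinarith
  · intro m
    have hshift : (3/4:ℝ)^(m - 2) ≤ 16/9 * (3/4:ℝ)^m := by
      rcases le_or_gt 2 m with h | h
      · have hm : m = (m - 2) + 2 := by omega
        rw [hm, pow_add]
        rw [show m - 2 + 2 - 2 = m - 2 by omega]
        have : (0:ℝ) ≤ (3/4:ℝ)^(m-2) := by positivity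
        nlinarith
      · interval_cases m <;> norm_num
    have h2 : (0:ℝ) ≤ (m:ℝ)^2 := by positivity
    have h3 := hterm m
    nlinarith

end Fin1

section Master

open Classical in
lemma varS_le_master : ∃ C : ℝ, 0 < C ∧ ∀ n : ℕ,
    tEx (fun ω : TOmega n => ((tS ω : ℝ) - tES n) ^ 2) ≤ C * n := by
  classical
  obtain ⟨C2, hC2pos, hC2⟩ := geom_bound
  refine ⟨2 + 2 * C2, by linarith, ?_⟩
  intro n
  set Sf : TOmega n → ℝ := fun ω => (tS ω : ℝ) with hSf
  set X : TOmega n → ℝ := fun ω => ∑ v, tJ ω v with hX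
  set Bc : TOmega n → ℝ := fun ω => ∑ v, tBadInd v ω with hBc
  have hScast : ∀ ω, Sf ω = ∑ v, if tSeymour ω v then (1:ℝ) else 0 := by
    intro ω
    rw [hSf]
    exact ncard_cast_eq_sum _
  have hSX : ∀ ω, Sf ω ≤ X ω := by
    intro ω
    rw [hScast ω, hX]
    exact Finset.sum_le_sum fun v _ => indSey_le_tJ ω v
  have hXSB : ∀ ω, X ω ≤ Sf ω + Bc ω := by
    intro ω
    rw [hScast ω, hX, hBc]
    dsimp only
    rw [← Finset.sum_add_distrib]
    exact Finset.sum_le_sum fun v _ => tJ_le_indSey_add ω v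
  have hBc_nonneg : ∀ ω, 0 ≤ Bc ω := by
    intro ω
    refine Finset.sum_nonneg fun v _ => ?_
    unfold tBadInd
    split <;> norm_num
  -- D := X - S
  set D : TOmega n → ℝ := fun ω => X ω - Sf ω with hD
  have hD0 : ∀ ω, 0 ≤ D ω := fun ω => by rw [hD]; dsimp only; linarith [hSX ω]
  have hDB : ∀ ω, D ω ≤ Bc ω := fun ω => by rw [hD]; dsimp only; linarith [hXSB ω]
  -- bound on E D^2
  have hBc2 : ∀ ω, Bc ω ^ 2 ≤ (n:ℝ) * ∑ v, tBadInd v ω := by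
    intro ω
    rw [hBc]
    dsimp only
    have h1 := sq_sum_le_card_mul_sum_sq (s := (Finset.univ : Finset (Fin n)))
      (f := fun v => tBadInd v ω)
    have h2 : ∀ v : Fin n, tBadInd v ω ^ 2 = tBadInd v ω := by
      intro v; unfold tBadInd; split <;> norm_num
    rw [Finset.card_univ, Fintype.card_fin] at h1
    calc (∑ v, tBadInd v ω) ^ 2 ≤ (n:ℝ) * ∑ v, tBadInd v ω ^ 2 := h1
      _ = (n:ℝ) * ∑ v, tBadInd v ω := by
          rw [Finset.sum_congr rfl fun v _ => h2 v]
  have hED2 : tEx (fun ω => D ω ^ 2) ≤ C2 * n := by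
    have step1 : tEx (fun ω => D ω ^ 2) ≤ tEx (fun ω : TOmega n => (n:ℝ) * ∑ v, tBadInd v ω) := by
      refine tEx_mono fun ω => ?_
      have h1 : D ω ^ 2 ≤ Bc ω ^ 2 := by nlinarith [hD0 ω, hDB ω]
      exact h1.trans (hBc2 ω)
    have step2 : tEx (fun ω : TOmega n => (n:ℝ) * ∑ v, tBadInd v ω)
        = (n:ℝ) * ∑ v : Fin n, tEx (tBadInd v) := by
      rw [tEx_smul]
      congr 1
      exact tEx_sum _ _
    have step3 : (n:ℝ) * ∑ v : Fin n, tEx (tBadInd v) ≤ (n:ℝ) * ((n:ℝ) * ((n:ℝ) * (3/4:ℝ)^(n-2))) := by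
      have h1 : ∑ v : Fin n, tEx (tBadInd v) ≤ (n:ℝ) * ((n:ℝ) * (3/4:ℝ)^(n-2)) := by
        calc ∑ v : Fin n, tEx (tBadInd v) ≤ ∑ _v : Fin n, (n:ℝ) * (3/4:ℝ)^(n-2) :=
              Finset.sum_le_sum fun v _ => tEx_badInd_le v
          _ = (n:ℝ) * ((n:ℝ) * (3/4:ℝ)^(n-2)) := by
              rw [Finset.sum_const, Finset.card_univ, Fintype.card_fin, nsmul_eq_mul]
      have hn : (0:ℝ) ≤ n := Nat.cast_nonneg n
      nlinarith
    have step4 : (n:ℝ) * ((n:ℝ) * ((n:ℝ) * (3/4:ℝ)^(n-2))) ≤ C2 * n := by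
      have h1 := hC2 n
      have hn : (0:ℝ) ≤ n := Nat.cast_nonneg n
      nlinarith
    linarith
  -- variance decomposition
  have hES : tES n = tEx Sf := rfl
  have hSdecomp : ∀ ω, Sf ω - tES n = (X ω - tEx X) - (D ω - tEx D) := by
    intro ω
    have : tEx D = tEx X - tEx Sf := by
      rw [hD]
      exact tEx_sub X Sf
    rw [hES, this, hD]
    dsimp only
    ring
  have hptwise : ∀ ω, (Sf ω - tES n) ^ 2
      ≤ 2 * (X ω - tEx X) ^ 2 + 2 * (D ω - tEx D) ^ 2 := by
    intro ω
    rw [hSdecomp ω]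
    nlinarith [sq_nonneg ((X ω - tEx X) + (D ω - tEx D))]
  calc tEx (fun ω : TOmega n => ((tS ω : ℝ) - tES n) ^ 2)
      ≤ tEx (fun ω => 2 * (X ω - tEx X) ^ 2 + 2 * (D ω - tEx D) ^ 2) :=
        tEx_mono fun ω => hptwise ω
    _ = 2 * tEx (fun ω => (X ω - tEx X) ^ 2) + 2 * tEx (fun ω => (D ω - tEx D) ^ 2) := by
        rw [tEx_add]
        rw [tEx_smul, tEx_smul]
    _ ≤ 2 * n + 2 * (C2 * n) := by
        have h1 : tEx (fun ω => (X ω - tEx X) ^ 2) ≤ n := varX_le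
        have h2 : tEx (fun ω => (D ω - tEx D) ^ 2) ≤ C2 * n := by
          rw [tEx_sq_sub]
          have := hED2
          nlinarith [sq_nonneg (tEx D)]
        linarith
    _ = (2 + 2 * C2) * n := by ring

end Master

section Final
variable {n : ℕ}

lemma tPr_nonneg (E : Set (TOmega n)) : 0 ≤ tPr E := by
  refine div_nonneg (Finset.sum_nonneg fun ω _ => ?_) tcard_pos.le
  exact Set.indicator_nonneg (fun _ _ => zero_le_one) ω

lemma chebyshev (g : TOmega n → ℝ) {t : ℝ} (ht : 0 < t) :
    tPr {ω | t ≤ |g ω|} ≤ tEx (fun ω => g ω ^ 2) / t ^ 2 := by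
  have hpt : ∀ ω : TOmega n,
      Set.indicator {ω : TOmega n | t ≤ |g ω|} (fun _ => (1:ℝ)) ω ≤ g ω ^ 2 / t ^ 2 := by
    intro ω
    by_cases h : ω ∈ {ω : TOmega n | t ≤ |g ω|}
    · rw [Set.indicator_of_mem h]
      have h1 : t ≤ |g ω| := h
      rw [le_div_iff₀ (by positivity), one_mul]
      calc t ^ 2 ≤ |g ω| ^ 2 := pow_le_pow_left₀ ht.le h1 2
        _ = g ω ^ 2 := sq_abs _
    · rw [Set.indicator_of_notMem h]
      positivity
  unfold tPr tEx
  have hstep : (∑ ω : TOmega n, Set.indicator {ω : TOmega n | t ≤ |g ω|} (fun _ => (1:ℝ)) ω)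
      ≤ ∑ ω : TOmega n, g ω ^ 2 / t ^ 2 := Finset.sum_le_sum fun ω _ => hpt ω
  have hc := tcard_pos (n := n)
  calc (∑ ω : TOmega n, Set.indicator {ω : TOmega n | t ≤ |g ω|} (fun _ => (1:ℝ)) ω)
        / (Fintype.card (TOmega n) : ℝ)
      ≤ (∑ ω : TOmega n, g ω ^ 2 / t ^ 2) / (Fintype.card (TOmega n) : ℝ) := by gcongr
    _ = (∑ ω : TOmega n, g ω ^ 2) / (Fintype.card (TOmega n) : ℝ) / t ^ 2 := by
        rw [← Finset.sum_div, div_div, div_div, mul_comm]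

end Final


/-- Chebychev-type concentration for the number of Seymour vertices of the random
tournament on `n` vertices:  there is a constant `K > 0` such that for every `A > 0` and
every `n ≥ 2`,
`P(|S_n − E(S_n)| ≥ A·√(n log n)) ≤ K / (A² log n)`;
in particular, for each fixed `A > 0` this probability tends to `0` as `n → ∞`. -/
theorem seymour_concentration :
    (∃ K : ℝ, 0 < K ∧ ∀ A : ℝ, 0 < A → ∀ n : ℕ, 2 ≤ n →
        tPr {ω : TOmega n | A * Real.sqrt ((n : ℝ) * Real.log n) ≤ |(tS ω : ℝ) - tES n|}
          ≤ K / (A ^ 2 * Real.log n)) ∧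
      ∀ A : ℝ, 0 < A →
        Filter.Tendsto
          (fun n : ℕ =>
            tPr {ω : TOmega n | A * Real.sqrt ((n : ℝ) * Real.log n) ≤ |(tS ω : ℝ) - tES n|})
          Filter.atTop (nhds 0) := by
  obtain ⟨C, hCpos, hC⟩ := varS_le_master
  have hmain : ∀ A : ℝ, 0 < A → ∀ n : ℕ, 2 ≤ n →
      tPr {ω : TOmega n | A * Real.sqrt ((n : ℝ) * Real.log n) ≤ |(tS ω : ℝ) - tES n|}
        ≤ C / (A ^ 2 * Real.log n) := by
    intro A hA n hn
    have hn1 : (1:ℝ) < n := by exact_mod_cast hn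
    have hlog : 0 < Real.log n := Real.log_pos hn1
    have hnpos : (0:ℝ) < n := by linarith
    have hnl : 0 < (n:ℝ) * Real.log n := mul_pos hnpos hlog
    have ht : 0 < A * Real.sqrt ((n:ℝ) * Real.log n) :=
      mul_pos hA (Real.sqrt_pos.2 hnl)
    have hcheb := chebyshev (fun ω : TOmega n => (tS ω : ℝ) - tES n) ht
    have hsq : (A * Real.sqrt ((n:ℝ) * Real.log n)) ^ 2 = A ^ 2 * ((n:ℝ) * Real.log n) := by
      rw [mul_pow, Real.sq_sqrt hnl.le]
    have h2 : tEx (fun ω : TOmega n => ((tS ω : ℝ) - tES n) ^ 2)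
        / (A * Real.sqrt ((n:ℝ) * Real.log n)) ^ 2
        ≤ (C * n) / (A ^ 2 * ((n:ℝ) * Real.log n)) := by
      have hden : (0:ℝ) < A ^ 2 * ((n:ℝ) * Real.log n) := mul_pos (pow_pos hA 2) hnl
      rw [hsq]
      exact (div_le_div_iff_of_pos_right hden).mpr (hC n)
    have h3 : (C * n) / (A ^ 2 * ((n:ℝ) * Real.log n)) = C / (A ^ 2 * Real.log n) := by
      field_simp
    calc tPr {ω : TOmega n | A * Real.sqrt ((n : ℝ) * Real.log n) ≤ |(tS ω : ℝ) - tES n|}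
        ≤ tEx (fun ω : TOmega n => ((tS ω : ℝ) - tES n) ^ 2)
          / (A * Real.sqrt ((n:ℝ) * Real.log n)) ^ 2 := hcheb
      _ ≤ (C * n) / (A ^ 2 * ((n:ℝ) * Real.log n)) := h2
      _ = C / (A ^ 2 * Real.log n) := h3
  refine ⟨⟨C, hCpos, hmain⟩, ?_⟩
  intro A hA
  have htend : Filter.Tendsto (fun n : ℕ => C / (A ^ 2 * Real.log n))
      Filter.atTop (nhds 0) := by
    have h1 : Filter.Tendsto (fun n : ℕ => Real.log n) Filter.atTop Filter.atTop :=
      Real.tendsto_log_atTop.comp tendsto_natCast_atTop_atTop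
    have h2 : Filter.Tendsto (fun n : ℕ => A ^ 2 * Real.log n) Filter.atTop Filter.atTop :=
      h1.const_mul_atTop (by positivity)
    have h3 := h2.inv_tendsto_atTop
    have h4 := h3.const_mul C
    simpa [div_eq_mul_inv] using h4
  refine squeeze_zero' (Filter.Eventually.of_forall fun n => tPr_nonneg _) ?_ htend
  filter_upwards [Filter.eventually_ge_atTop 2] with n hn
  exact hmain A hA n hn
end

section
/- Let 0 < p < 1/2 and let Bin(n,p) be a binomial random variable with n trials and success probability p. Then P(Bin(n,p) > (n−1)/2) ≤ (2p·e^{1−2p})^{n/2}. -/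
/-- Chernoff-type bound for the binomial distribution:  if `0 < p < 1/2` and `Bin(n, p)` is
a binomial random variable with `n` trials and success probability `p`, then
`P(Bin(n, p) > (n − 1)/2) ≤ (2p·e^{1−2p})^{n/2}`. -/
theorem binomial_upper_tail_bound (n : ℕ) (p : ℝ) (hp0 : 0 < p) (hp : p < 1 / 2) :
    (∑ k ∈ Finset.range (n + 1),
        if ((n : ℝ) - 1) / 2 < (k : ℝ) then
          (n.choose k : ℝ) * p ^ k * (1 - p) ^ (n - k)
        else 0) ≤
      (2 * p * Real.exp (1 - 2 * p)) ^ ((n : ℝ) / 2) := by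
  set q : ℝ := 1 - p with hq_def
  have hq0 : 0 < q := by rw [hq_def]; linarith
  have hpq : p ≤ q := by rw [hq_def]; linarith
  have hpq0 : (0:ℝ) ≤ p * q := by positivity
  have key : ∀ k ∈ Finset.range (n+1),
      (if ((n : ℝ) - 1) / 2 < (k : ℝ) then
          (n.choose k : ℝ) * p ^ k * (1 - p) ^ (n - k)
        else 0) ≤ (n.choose k : ℝ) * (p * q) ^ ((n:ℝ)/2) := by
    intro k hk
    rw [Finset.mem_range] at hk
    have hkn : k ≤ n := Nat.lt_succ_iff.mp hk
    split_ifs with h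
    · have hn2k : (n:ℝ)/2 ≤ (k:ℝ) := by
        have h1 : n ≤ 2 * k := by
          by_contra hcon
          push_neg at hcon
          have h2 : 2 * k + 1 ≤ n := hcon
          have h3 : (2*(k:ℝ)+1 : ℝ) ≤ (n:ℝ) := by exact_mod_cast h2
          linarith
        have : (n:ℝ) ≤ 2 * (k:ℝ) := by exact_mod_cast h1
        linarith
      have hterm : p ^ k * q ^ (n - k) ≤ (p * q) ^ ((n:ℝ)/2) := by
        have e1 : p ^ k * q ^ (n - k) = p ^ ((k:ℝ)) * q ^ ((n:ℝ) - (k:ℝ)) := by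
          rw [← Real.rpow_natCast p k, ← Real.rpow_natCast q (n-k)]
          congr 2
          rw [Nat.cast_sub hkn]
        set a : ℝ := (k:ℝ) - (n:ℝ)/2 with ha_def
        have ha : 0 ≤ a := by rw [ha_def]; linarith
        have e2 : p ^ ((k:ℝ)) = p ^ ((n:ℝ)/2) * p ^ a := by
          rw [← Real.rpow_add hp0]; congr 1; rw [ha_def]; ring
        have e3 : q ^ ((n:ℝ) - (k:ℝ)) = q ^ ((n:ℝ)/2) / q ^ a := by
          rw [← Real.rpow_sub hq0]; congr 1; rw [ha_def]; ring
        rw [e1, e2, e3]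
        have e4 : p ^ ((n:ℝ)/2) * p ^ a * (q ^ ((n:ℝ)/2) / q ^ a)
            = (p * q) ^ ((n:ℝ)/2) * ((p/q) ^ a) := by
          rw [Real.mul_rpow hp0.le hq0.le, Real.div_rpow hp0.le hq0.le]
          ring
        rw [e4]
        have hle1 : (p/q) ^ a ≤ 1 :=
          Real.rpow_le_one (by positivity) (by rw [div_le_one hq0]; exact hpq) ha
        nlinarith [Real.rpow_nonneg hpq0 ((n:ℝ)/2), Real.rpow_nonneg (show (0:ℝ) ≤ p/q by positivity) a]
      have hc : (0:ℝ) ≤ (n.choose k : ℝ) := by positivity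
      calc (n.choose k : ℝ) * p ^ k * (1 - p) ^ (n - k)
          = (n.choose k : ℝ) * (p ^ k * q ^ (n - k)) := by rw [hq_def]; ring
        _ ≤ (n.choose k : ℝ) * (p * q) ^ ((n:ℝ)/2) := by
            exact mul_le_mul_of_nonneg_left hterm hc
    · positivity
  have hsum : (∑ k ∈ Finset.range (n + 1),
        if ((n : ℝ) - 1) / 2 < (k : ℝ) then
          (n.choose k : ℝ) * p ^ k * (1 - p) ^ (n - k)
        else 0) ≤ (2:ℝ)^n * (p * q) ^ ((n:ℝ)/2) := by
    calc _ ≤ ∑ k ∈ Finset.range (n + 1), (n.choose k : ℝ) * (p * q) ^ ((n:ℝ)/2) :=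
          Finset.sum_le_sum key
      _ = (2:ℝ)^n * (p * q) ^ ((n:ℝ)/2) := by
          rw [← Finset.sum_mul]
          congr 1
          rw [← Nat.cast_sum, Nat.sum_range_choose]
          push_cast; ring
  have e5 : (2:ℝ)^n * (p * q) ^ ((n:ℝ)/2) = (4 * (p*q)) ^ ((n:ℝ)/2) := by
    rw [Real.mul_rpow (by norm_num) hpq0]
    congr 1
    have h4 : (4:ℝ) = (2:ℝ)^((2:ℕ):ℝ) := by rw [Real.rpow_natCast]; norm_num
    rw [h4, ← Real.rpow_natCast (2:ℝ) n, ← Real.rpow_mul (by norm_num : (0:ℝ) ≤ 2)]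
    congr 1
    push_cast; ring
  have hbase : 4 * (p * q) ≤ 2 * p * Real.exp (1 - 2 * p) := by
    have he : (1 - 2*p) + 1 ≤ Real.exp (1 - 2*p) := Real.add_one_le_exp _
    have h2q : 2 * q ≤ Real.exp (1 - 2*p) := by rw [hq_def]; linarith
    calc 4 * (p * q) = (2*p) * (2*q) := by ring
      _ ≤ (2*p) * Real.exp (1 - 2*p) :=
          mul_le_mul_of_nonneg_left h2q (by linarith)
      _ = 2 * p * Real.exp (1 - 2 * p) := by ring
  calc _ ≤ (2:ℝ)^n * (p * q) ^ ((n:ℝ)/2) := hsum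
    _ = (4 * (p*q)) ^ ((n:ℝ)/2) := e5
    _ ≤ (2 * p * Real.exp (1 - 2 * p)) ^ ((n:ℝ)/2) :=
        Real.rpow_le_rpow (by positivity) hbase (by positivity)
end

section
/- Let S_n be the number of Seymour vertices of the random digraph D(n,p) with n ≥ 2 and 0 < p < 1/2. Then E(S_n) ≥ n·P(Bin(n−1,p) ≤ (n−1)/2) − n(n−1)·(1−p)·(1−p²)^{n−2}, where Bin(n−1,p) denotes a binomial random variable with n−1 trials and success probability p. -/
/-! Model of the random digraph `D(n, p)` on vertex set `Fin n`:  a sample point assigns a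
Boolean to every ordered pair of vertices, and the arc `u → v` (for `u ≠ v`) is present iff
the Boolean at `(u, v)` is `true`.  The probability of a sample point is the product, over
ordered pairs of distinct vertices, of `p` for each present arc and `1 − p` for each absent
arc (the unused diagonal coordinates are forced to be `false`), so that the arcs are
independent and each is present with probability `p`. -/

/-- The sample space of the random digraph on `n` vertices. -/
abbrev DOmega (n : ℕ) := Fin n → Fin n → Bool

/-- `dadj ω u v` : the arc `u → v` is present in the digraph coded by `ω`. -/
def dadj {n : ℕ} (ω : DOmega n) (u v : Fin n) : Prop :=
  u ≠ v ∧ ω u v = true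

/-- The probability weight of the sample point `ω` in the model `D(n, p)`. -/
noncomputable def dwt {n : ℕ} (p : ℝ) (ω : DOmega n) : ℝ :=
  ∏ u : Fin n, ∏ v : Fin n,
    if u = v then (if ω u v then 0 else 1) else (if ω u v then p else 1 - p)

/-- Probability of an event in the random digraph model `D(n, p)`. -/
noncomputable def dPr {n : ℕ} (p : ℝ) (E : Set (DOmega n)) : ℝ :=
  ∑ ω : DOmega n, E.indicator (dwt p) ω

/-- Expectation of a random variable in the random digraph model `D(n, p)`. -/
noncomputable def dEx {n : ℕ} (p : ℝ) (f : DOmega n → ℝ) : ℝ :=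
  ∑ ω : DOmega n, dwt p ω * f ω

/-- The first out-neighborhood of `v`: vertices at directed distance exactly 1. -/
def dN1 {n : ℕ} (ω : DOmega n) (v : Fin n) : Set (Fin n) := {w | dadj ω v w}

/-- The second out-neighborhood of `v`: vertices at directed distance exactly 2. -/
def dN2 {n : ℕ} (ω : DOmega n) (v : Fin n) : Set (Fin n) :=
  {w | w ≠ v ∧ ¬ dadj ω v w ∧ ∃ x, dadj ω v x ∧ dadj ω x w}

/-- `v` is a Seymour vertex of the digraph coded by `ω`. -/
def dSeymour {n : ℕ} (ω : DOmega n) (v : Fin n) : Prop :=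
  (dN1 ω v).ncard ≤ (dN2 ω v).ncard

/-- The number of Seymour vertices. -/
noncomputable def dS {n : ℕ} (ω : DOmega n) : ℕ := {v | dSeymour ω v}.ncard

/-- The expected number of Seymour vertices of `D(n, p)`. -/
noncomputable def dES (n : ℕ) (p : ℝ) : ℝ := dEx p (fun ω : DOmega n => (dS ω : ℝ))

open Finset

section RowAux

variable {n : ℕ}

lemma sum_prod_pi {ι : Type*} [Fintype ι] [DecidableEq ι] {κ : ι → Type*}
    [∀ i, Fintype (κ i)] (g : ∀ i, κ i → ℝ) :
    ∑ f : ∀ i, κ i, ∏ i, g i (f i) = ∏ i, ∑ x, g i x :=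
  (Fintype.prod_sum g).symm

noncomputable def rowW (p : ℝ) {n : ℕ} (v : Fin n) (r : Fin n → Bool) : ℝ :=
  ∏ w, if v = w then (if r w then (0:ℝ) else 1) else (if r w then p else 1 - p)

lemma dwt_eq (p : ℝ) (ω : DOmega n) : dwt p ω = ∏ v, rowW p v (ω v) := rfl

lemma rowW_nonneg {p : ℝ} (h0 : 0 ≤ p) (h1 : p ≤ 1) (v : Fin n) (r : Fin n → Bool) :
    0 ≤ rowW p v r :=
  Finset.prod_nonneg fun w _ => by split_ifs <;> norm_num <;> linarith

lemma dwt_nonneg {p : ℝ} (h0 : 0 ≤ p) (h1 : p ≤ 1) (ω : DOmega n) : 0 ≤ dwt p ω := by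
  rw [dwt_eq]; exact Finset.prod_nonneg fun v _ => rowW_nonneg h0 h1 v (ω v)

lemma sum_rowW (p : ℝ) (v : Fin n) : ∑ r : Fin n → Bool, rowW p v r = 1 := by
  unfold rowW
  rw [sum_prod_pi (fun w (b : Bool) =>
    if v = w then (if b then (0:ℝ) else 1) else (if b then p else 1 - p))]
  refine Finset.prod_eq_one fun w _ => ?_
  rw [Fintype.sum_bool]
  by_cases h : v = w <;> simp [h]

lemma sum_dwt_mul_row (p : ℝ) (v : Fin n) (c : (Fin n → Bool) → ℝ) :
    ∑ ω : DOmega n, dwt p ω * c (ω v) = ∑ r : Fin n → Bool, rowW p v r * c r := by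
  have h1 : ∀ ω : DOmega n, dwt p ω * c (ω v)
      = ∏ u, (rowW p u (ω u) * if u = v then c (ω u) else 1) := by
    intro ω
    rw [Finset.prod_mul_distrib, ← dwt_eq]
    congr 1
    rw [Finset.prod_ite_eq' Finset.univ v fun u => c (ω u), if_pos (Finset.mem_univ v)]
  calc ∑ ω : DOmega n, dwt p ω * c (ω v)
      = ∑ ω : DOmega n, ∏ u, (rowW p u (ω u) * if u = v then c (ω u) else 1) :=
        Finset.sum_congr rfl fun ω _ => h1 ω
    _ = ∏ u, ∑ r : Fin n → Bool, (rowW p u r * if u = v then c r else 1) :=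
        sum_prod_pi (fun u (r : Fin n → Bool) => rowW p u r * if u = v then c r else 1)
    _ = ∑ r : Fin n → Bool, rowW p v r * c r := by
        have h2 : ∀ u : Fin n, (∑ r : Fin n → Bool, (rowW p u r * if u = v then c r else 1))
            = if u = v then (∑ r : Fin n → Bool, rowW p v r * c r) else 1 := by
          intro u
          by_cases h : u = v
          · subst h; simp
          · simp [h, sum_rowW p u]
        rw [Finset.prod_congr rfl fun u _ => h2 u,
          Finset.prod_ite_eq' Finset.univ v
            (fun _ => (∑ r : Fin n → Bool, rowW p v r * c r)),
          if_pos (Finset.mem_univ v)]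

end RowAux

section AEvent
variable {n : ℕ}

def rowEquiv (n : ℕ) : (Fin n → Bool) ≃ Finset (Fin n) where
  toFun r := univ.filter fun w => r w = true
  invFun s := fun w => decide (w ∈ s)
  left_inv r := by funext w; simp
  right_inv s := by ext w; simp

lemma sum_rows_eq (F : (Fin n → Bool) → ℝ) :
    ∑ r : Fin n → Bool, F r = ∑ s : Finset (Fin n), F (fun w => decide (w ∈ s)) := by
  rw [← Equiv.sum_comp (rowEquiv n) (fun s => F (fun w => decide (w ∈ s)))]
  refine Finset.sum_congr rfl fun r _ => ?_
  congr 1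
  funext w
  simp [rowEquiv]

lemma rowW_ind_zero (p : ℝ) (v : Fin n) (s : Finset (Fin n)) (hv : v ∈ s) :
    rowW p v (fun w => decide (w ∈ s)) = 0 := by
  unfold rowW
  refine Finset.prod_eq_zero (Finset.mem_univ v) ?_
  simp [hv]

lemma rowW_ind (p : ℝ) (v : Fin n) (s : Finset (Fin n)) (hv : v ∉ s) :
    rowW p v (fun w => decide (w ∈ s)) = p ^ #s * (1 - p) ^ (n - 1 - #s) := by
  unfold rowW
  rw [← Finset.prod_mul_prod_compl s]
  have h1 : ∀ w ∈ s, (if v = w then (if decide (w ∈ s) then (0:ℝ) else 1)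
      else (if decide (w ∈ s) then p else 1 - p)) = p := by
    intro w hw
    have : v ≠ w := fun h => hv (h ▸ hw)
    simp [this, hw]
  have hvc : v ∈ sᶜ := by simpa using hv
  rw [Finset.prod_congr rfl h1, Finset.prod_const,
    ← Finset.mul_prod_erase sᶜ _ hvc]
  have h2 : ∀ w ∈ sᶜ.erase v, (if v = w then (if decide (w ∈ s) then (0:ℝ) else 1)
      else (if decide (w ∈ s) then p else 1 - p)) = 1 - p := by
    intro w hw
    rw [Finset.mem_erase, Finset.mem_compl] at hw
    have hvw : v ≠ w := fun h => hw.1 h.symm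
    simp [hvw, hw.2]
  rw [Finset.prod_congr rfl h2, Finset.prod_const]
  have hc : #(sᶜ.erase v) = n - 1 - #s := by
    rw [Finset.card_erase_of_mem hvc, Finset.card_compl, Fintype.card_fin]
    omega
  rw [hc]
  simp [hv]

lemma cnt_ind (v : Fin n) (s : Finset (Fin n)) (hv : v ∉ s) :
    #(univ.filter fun w => v ≠ w ∧ (fun w => decide (w ∈ s)) w = true) = #s := by
  congr 1
  ext w
  simp only [Finset.mem_filter, Finset.mem_univ, true_and, decide_eq_true_eq]
  constructor
  · exact fun h => h.2
  · exact fun h => ⟨fun he => hv (he ▸ h), h⟩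

end AEvent


section APr
variable {n : ℕ}

def dA (n : ℕ) (v : Fin n) : Set (DOmega n) :=
  {ω | 2 * (dN1 ω v).ncard ≤ n - 1}

lemma ncard_dN1 (ω : DOmega n) (v : Fin n) :
    (dN1 ω v).ncard = #(univ.filter fun w => v ≠ w ∧ ω v w = true) := by
  classical
  have h : dN1 ω v = {w | v ≠ w ∧ ω v w = true} := rfl
  rw [h, Set.ncard_eq_toFinset_card', Set.toFinset_setOf]

lemma dPr_dA (p : ℝ) (v : Fin n) (hn : 1 ≤ n) :
    dPr p (dA n v) = ∑ k ∈ range n,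
      if 2 * k ≤ n - 1 then ((n - 1).choose k : ℝ) * (p ^ k * (1 - p) ^ (n - 1 - k)) else 0 := by
  have h0 : dPr p (dA n v) = ∑ ω : DOmega n, dwt p ω *
      (if 2 * #(univ.filter fun w => v ≠ w ∧ (ω v) w = true) ≤ n - 1 then (1:ℝ) else 0) := by
    classical
    unfold dPr
    refine Finset.sum_congr rfl fun ω _ => ?_
    rw [Set.indicator_apply]
    have hmem : ω ∈ dA n v ↔ 2 * #(univ.filter fun w => v ≠ w ∧ (ω v) w = true) ≤ n - 1 := by
      rw [dA, Set.mem_setOf_eq, ncard_dN1]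
    by_cases h : ω ∈ dA n v
    · rw [if_pos h, if_pos (hmem.1 h), mul_one]
    · rw [if_neg h, if_neg (fun hc => h (hmem.2 hc)), mul_zero]
  rw [h0, sum_dwt_mul_row p v (fun r =>
      (if 2 * #(univ.filter fun w => v ≠ w ∧ r w = true) ≤ n - 1 then (1:ℝ) else 0)),
    sum_rows_eq (fun r => rowW p v r *
      (if 2 * #(univ.filter fun w => v ≠ w ∧ r w = true) ≤ n - 1 then (1:ℝ) else 0))]
  have h1 : ∀ s : Finset (Fin n), rowW p v (fun w => decide (w ∈ s)) *
      (if 2 * #(univ.filter fun w => v ≠ w ∧ decide (w ∈ s) = true) ≤ n - 1 then (1:ℝ) else 0)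
      = if v ∈ s then 0 else
        (if 2 * #s ≤ n - 1 then p ^ #s * (1 - p) ^ (n - 1 - #s) else 0) := by
    intro s
    by_cases hv : v ∈ s
    · rw [rowW_ind_zero p v s hv, zero_mul, if_pos hv]
    · rw [rowW_ind p v s hv, cnt_ind v s hv, if_neg hv, mul_ite, mul_one, mul_zero]
  rw [Finset.sum_congr rfl fun s _ => h1 s]
  have h2 : ∑ s : Finset (Fin n), (if v ∈ s then (0:ℝ) else
        (if 2 * #s ≤ n - 1 then p ^ #s * (1 - p) ^ (n - 1 - #s) else 0))
      = ∑ s ∈ (univ.erase v).powerset,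
        (if 2 * #s ≤ n - 1 then p ^ #s * (1 - p) ^ (n - 1 - #s) else 0) := by
    rw [← Finset.sum_subset (Finset.subset_univ (univ.erase v).powerset)]
    · refine Finset.sum_congr rfl fun s hs => ?_
      rw [Finset.mem_powerset, Finset.subset_erase] at hs
      rw [if_neg hs.2]
    · intro s _ hs
      rw [Finset.mem_powerset, Finset.subset_erase] at hs
      push_neg at hs
      rw [if_pos (hs (Finset.subset_univ s))]
  rw [h2, Finset.sum_powerset_apply_card
    (fun m => if 2 * m ≤ n - 1 then p ^ m * (1 - p) ^ (n - 1 - m) else 0)]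
  have hcard : #(univ.erase v) = n - 1 := by
    rw [Finset.card_erase_of_mem (Finset.mem_univ v), Finset.card_univ, Fintype.card_fin]
  rw [hcard]
  have hr : n - 1 + 1 = n := by omega
  rw [hr]
  refine Finset.sum_congr rfl fun k _ => ?_
  rw [nsmul_eq_mul]
  split_ifs with h
  · ring
  · rw [mul_zero]

end APr

section BPr
variable {n : ℕ}

def dB (n : ℕ) (v w : Fin n) : Set (DOmega n) :=
  {ω | ω v w = false ∧ ∀ x, ¬(dadj ω v x ∧ dadj ω x w)}

lemma sum_rowW_mul_avoid (p : ℝ) (x w : Fin n) (hxw : x ≠ w) :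
    ∑ s : Fin n → Bool, rowW p x s * (if s w then (0:ℝ) else 1) = 1 - p := by
  have key : ∀ s : Fin n → Bool, rowW p x s * (if s w then (0:ℝ) else 1)
      = ∏ w', ((if x = w' then (if s w' then (0:ℝ) else 1)
          else (if s w' then p else 1 - p)) *
          (if w' = w then (if s w' then (0:ℝ) else 1) else 1)) := by
    intro s
    rw [Finset.prod_mul_distrib]
    unfold rowW
    congr 1
    rw [Finset.prod_ite_eq' Finset.univ w (fun w' => if s w' then (0:ℝ) else 1),
      if_pos (Finset.mem_univ w)]
  rw [Finset.sum_congr rfl fun s _ => key s,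
    sum_prod_pi (fun w' (b : Bool) => (if x = w' then (if b then (0:ℝ) else 1)
      else (if b then p else 1 - p)) * (if w' = w then (if b then (0:ℝ) else 1) else 1))]
  have h1 : ∀ w' : Fin n, (∑ b : Bool, (if x = w' then (if b then (0:ℝ) else 1)
      else (if b then p else 1 - p)) * (if w' = w then (if b then (0:ℝ) else 1) else 1))
      = if w' = w then 1 - p else 1 := by
    intro w'
    rw [Fintype.sum_bool]
    by_cases h1 : w' = w
    · subst h1
      simp [hxw]
    · by_cases h2 : x = w' <;> simp [h1, h2]
  rw [Finset.prod_congr rfl fun w' _ => h1 w',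
    Finset.prod_ite_eq' Finset.univ w (fun _ => (1:ℝ) - p), if_pos (Finset.mem_univ w)]

end BPr

section BPr2
variable {n : ℕ}

lemma dPr_dB (p : ℝ) (v w : Fin n) (hvw : v ≠ w) :
    dPr p (dB n v w) = (1 - p) * (1 - p ^ 2) ^ (n - 2) := by
  classical
  have h0 : dPr p (dB n v w) = ∑ ω : DOmega n,
      ∏ x, (rowW p x (ω x) * (if x = v then (if ω v w = true then (0:ℝ) else 1) else 1) *
        (if x ≠ v ∧ x ≠ w ∧ ω v x = true ∧ ω x w = true then (0:ℝ) else 1)) := by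
    unfold dPr
    refine Finset.sum_congr rfl fun ω _ => ?_
    rw [Set.indicator_apply]
    by_cases h : ω ∈ dB n v w
    · rw [if_pos h]
      obtain ⟨hb, hforall⟩ := h
      rw [dwt_eq]
      refine Finset.prod_congr rfl fun x _ => ?_
      have e1 : (if x = v then (if ω v w = true then (0:ℝ) else 1) else 1) = 1 := by
        rw [hb]; simp
      have e2 : (if x ≠ v ∧ x ≠ w ∧ ω v x = true ∧ ω x w = true then (0:ℝ) else 1) = 1 := by
        rw [if_neg]
        rintro ⟨hxv, hxw, hb1, hb2⟩
        exact hforall x ⟨⟨Ne.symm hxv, hb1⟩, ⟨hxw, hb2⟩⟩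
      rw [e1, e2, mul_one, mul_one]
    · rw [if_neg h]
      symm
      simp only [dB, Set.mem_setOf_eq, not_and, not_forall, not_not] at h
      by_cases hb : ω v w = false
      · obtain ⟨x, hx1, hx2⟩ := h hb
        refine Finset.prod_eq_zero (Finset.mem_univ x) ?_
        have e3 : (if x ≠ v ∧ x ≠ w ∧ ω v x = true ∧ ω x w = true then (0:ℝ) else 1) = 0 := by
          rw [if_pos ⟨Ne.symm hx1.1, hx2.1, hx1.2, hx2.2⟩]
        rw [e3, mul_zero]
      · have hb' : ω v w = true := by
          cases hbe : ω v w
          · exact absurd hbe hb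
          · rfl
        refine Finset.prod_eq_zero (Finset.mem_univ v) ?_
        rw [if_pos rfl, hb']
        simp
  have hins : ∀ ω : DOmega n,
      (∏ x, (rowW p x (ω x) * (if x = v then (if ω v w = true then (0:ℝ) else 1) else 1) *
        (if x ≠ v ∧ x ≠ w ∧ ω v x = true ∧ ω x w = true then (0:ℝ) else 1)))
      = ∑ r : Fin n → Bool, (if ω v = r then
          ∏ x, (rowW p x (ω x) * (if x = v then (if r w = true then (0:ℝ) else 1) else 1) *
            (if x ≠ v ∧ x ≠ w ∧ r x = true ∧ ω x w = true then (0:ℝ) else 1)) else 0) := by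
    intro ω
    rw [Finset.sum_ite_eq Finset.univ (ω v) (fun r =>
      ∏ x, (rowW p x (ω x) * (if x = v then (if r w = true then (0:ℝ) else 1) else 1) *
        (if x ≠ v ∧ x ≠ w ∧ r x = true ∧ ω x w = true then (0:ℝ) else 1))),
      if_pos (Finset.mem_univ (ω v))]
  have hinner : ∀ r : Fin n → Bool,
      (∑ ω : DOmega n, if ω v = r then
          (∏ x, (rowW p x (ω x) * (if x = v then (if r w = true then (0:ℝ) else 1) else 1) *
            (if x ≠ v ∧ x ≠ w ∧ r x = true ∧ ω x w = true then (0:ℝ) else 1))) else 0)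
      = (rowW p v r * (if r w = true then (0:ℝ) else 1)) *
          ∏ x, (if x ≠ v ∧ x ≠ w ∧ r x = true then 1 - p else 1) := by
    intro r
    have hpt : ∀ ω : DOmega n, (if ω v = r then
          (∏ x, (rowW p x (ω x) * (if x = v then (if r w = true then (0:ℝ) else 1) else 1) *
            (if x ≠ v ∧ x ≠ w ∧ r x = true ∧ ω x w = true then (0:ℝ) else 1))) else 0)
        = ∏ x, (rowW p x (ω x) * (if x = v then (if r w = true then (0:ℝ) else 1) else 1) *
            (if x ≠ v ∧ x ≠ w ∧ r x = true ∧ ω x w = true then (0:ℝ) else 1) *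
            (if x = v then (if ω x = r then (1:ℝ) else 0) else 1)) := by
      intro ω
      by_cases h : ω v = r
      · rw [if_pos h]
        refine Finset.prod_congr rfl fun x _ => ?_
        by_cases hx : x = v
        · simp [hx, h]
        · simp [hx]
      · rw [if_neg h]
        symm
        refine Finset.prod_eq_zero (Finset.mem_univ v) ?_
        simp [h]
    rw [Finset.sum_congr rfl fun ω _ => hpt ω,
      sum_prod_pi (fun x (s : Fin n → Bool) =>
        rowW p x s * (if x = v then (if r w = true then (0:ℝ) else 1) else 1) *
          (if x ≠ v ∧ x ≠ w ∧ r x = true ∧ s w = true then (0:ℝ) else 1) *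
          (if x = v then (if s = r then (1:ℝ) else 0) else 1))]
    have hfac : ∀ x : Fin n, (∑ s : Fin n → Bool,
        rowW p x s * (if x = v then (if r w = true then (0:ℝ) else 1) else 1) *
          (if x ≠ v ∧ x ≠ w ∧ r x = true ∧ s w = true then (0:ℝ) else 1) *
          (if x = v then (if s = r then (1:ℝ) else 0) else 1))
        = if x = v then (rowW p v r * (if r w = true then (0:ℝ) else 1))
          else (if x ≠ v ∧ x ≠ w ∧ r x = true then 1 - p else 1) := by
      intro x
      by_cases hx : x = v
      · have e : ∀ s : Fin n → Bool,
            rowW p x s * (if x = v then (if r w = true then (0:ℝ) else 1) else 1) *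
              (if x ≠ v ∧ x ≠ w ∧ r x = true ∧ s w = true then (0:ℝ) else 1) *
              (if x = v then (if s = r then (1:ℝ) else 0) else 1)
            = if s = r then rowW p x s * (if r w = true then (0:ℝ) else 1) else 0 := by
          intro s
          by_cases hs : s = r <;> simp [hs, hx]
        rw [Finset.sum_congr rfl fun s _ => e s, Finset.sum_ite_eq' Finset.univ r
          (fun s => rowW p x s * (if r w = true then (0:ℝ) else 1)),
          if_pos (Finset.mem_univ r), if_pos hx, hx]
      · by_cases hc : x ≠ w ∧ r x = true
        · have e : ∀ s : Fin n → Bool,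
              rowW p x s * (if x = v then (if r w = true then (0:ℝ) else 1) else 1) *
                (if x ≠ v ∧ x ≠ w ∧ r x = true ∧ s w = true then (0:ℝ) else 1) *
                (if x = v then (if s = r then (1:ℝ) else 0) else 1)
              = rowW p x s * (if s w = true then (0:ℝ) else 1) := by
            intro s
            simp [hx, hc.1, hc.2]
          rw [Finset.sum_congr rfl fun s _ => e s, sum_rowW_mul_avoid p x w hc.1,
            if_neg hx, if_pos (⟨hx, hc.1, hc.2⟩ : x ≠ v ∧ x ≠ w ∧ r x = true)]
        · have e : ∀ s : Fin n → Bool,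
              rowW p x s * (if x = v then (if r w = true then (0:ℝ) else 1) else 1) *
                (if x ≠ v ∧ x ≠ w ∧ r x = true ∧ s w = true then (0:ℝ) else 1) *
                (if x = v then (if s = r then (1:ℝ) else 0) else 1)
              = rowW p x s := by
            intro s
            have h3 : ¬(x ≠ v ∧ x ≠ w ∧ r x = true ∧ s w = true) := by
              rintro ⟨_, h2', h3', _⟩; exact hc ⟨h2', h3'⟩
            rw [if_neg h3]
            simp [hx]
          rw [Finset.sum_congr rfl fun s _ => e s, sum_rowW p x, if_neg hx,
            if_neg (fun hh : x ≠ v ∧ x ≠ w ∧ r x = true => hc ⟨hh.2.1, hh.2.2⟩)]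
    rw [Finset.prod_congr rfl fun x _ => hfac x,
      ← Finset.mul_prod_erase Finset.univ _ (Finset.mem_univ v), if_pos rfl]
    congr 1
    rw [← Finset.mul_prod_erase Finset.univ
      (fun x => if x ≠ v ∧ x ≠ w ∧ r x = true then 1 - p else 1) (Finset.mem_univ v)]
    have hv1 : (if v ≠ v ∧ v ≠ w ∧ r v = true then (1:ℝ) - p else 1) = 1 := by simp
    rw [hv1, one_mul]
    refine Finset.prod_congr rfl fun x hx => ?_
    rw [if_neg (Finset.mem_erase.1 hx).1]
  have hfinal : (∑ r : Fin n → Bool, (rowW p v r * (if r w = true then (0:ℝ) else 1)) *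
      ∏ x, (if x ≠ v ∧ x ≠ w ∧ r x = true then 1 - p else 1))
      = (1 - p) * (1 - p ^ 2) ^ (n - 2) := by
    have key : ∀ r : Fin n → Bool, (rowW p v r * (if r w = true then (0:ℝ) else 1)) *
        ∏ x, (if x ≠ v ∧ x ≠ w ∧ r x = true then 1 - p else 1)
        = ∏ x, ((if v = x then (if r x then (0:ℝ) else 1) else (if r x then p else 1 - p)) *
            (if x = w then (if r x then (0:ℝ) else 1) else 1) *
            (if x ≠ v ∧ x ≠ w ∧ r x = true then 1 - p else 1)) := by
      intro r
      have hA : rowW p v r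
          = ∏ x, (if v = x then (if r x then (0:ℝ) else 1) else (if r x then p else 1 - p)) := rfl
      have hB : (if r w = true then (0:ℝ) else 1)
          = ∏ x, (if x = w then (if r x then (0:ℝ) else 1) else 1) := by
        rw [Finset.prod_ite_eq' Finset.univ w (fun x => if r x then (0:ℝ) else 1),
          if_pos (Finset.mem_univ w)]
      rw [Finset.prod_mul_distrib, Finset.prod_mul_distrib, ← hA, ← hB]
    rw [Finset.sum_congr rfl fun r _ => key r,
      sum_prod_pi (fun x (b : Bool) =>
        (if v = x then (if b then (0:ℝ) else 1) else (if b then p else 1 - p)) *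
          (if x = w then (if b then (0:ℝ) else 1) else 1) *
          (if x ≠ v ∧ x ≠ w ∧ b = true then 1 - p else 1))]
    have hF : ∀ x : Fin n, (∑ b : Bool,
        (if v = x then (if b then (0:ℝ) else 1) else (if b then p else 1 - p)) *
          (if x = w then (if b then (0:ℝ) else 1) else 1) *
          (if x ≠ v ∧ x ≠ w ∧ b = true then 1 - p else 1))
        = if x = v then 1 else if x = w then 1 - p else 1 - p ^ 2 := by
      intro x
      rw [Fintype.sum_bool]
      by_cases h1 : x = v
      · subst h1
        simp [hvw]
      · by_cases h2 : x = w
        · subst h2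
          have hvx : v ≠ x := hvw
          simp [h1, hvx]
        · have hvx : v ≠ x := fun h => h1 h.symm
          simp [h1, h2, hvx]
          ring
    rw [Finset.prod_congr rfl fun x _ => hF x,
      ← Finset.mul_prod_erase Finset.univ _ (Finset.mem_univ v), if_pos rfl, one_mul]
    have hw' : w ∈ Finset.univ.erase v := Finset.mem_erase.2 ⟨Ne.symm hvw, Finset.mem_univ w⟩
    rw [← Finset.mul_prod_erase _ _ hw']
    have hwv : (if w = v then (1:ℝ) else if w = w then 1 - p else 1 - p ^ 2) = 1 - p := by
      rw [if_neg (Ne.symm hvw), if_pos rfl]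
    rw [hwv]
    have hrest : ∀ x ∈ (Finset.univ.erase v).erase w,
        (if x = v then (1:ℝ) else if x = w then 1 - p else 1 - p ^ 2) = 1 - p ^ 2 := by
      intro x hx
      rw [Finset.mem_erase] at hx
      rw [if_neg (Finset.mem_erase.1 hx.2).1, if_neg hx.1]
    rw [Finset.prod_congr rfl hrest, Finset.prod_const]
    have hcard : #((Finset.univ.erase v).erase w) = n - 2 := by
      rw [Finset.card_erase_of_mem hw', Finset.card_erase_of_mem (Finset.mem_univ v),
        Finset.card_univ, Fintype.card_fin]
      omega
    rw [hcard]
  rw [h0, Finset.sum_congr rfl fun ω _ => hins ω, Finset.sum_comm,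
    Finset.sum_congr rfl fun r _ => hinner r, hfinal]

end BPr2

section PrBasic
variable {n : ℕ}

lemma dPr_nonneg {p : ℝ} (h0 : 0 ≤ p) (h1 : p ≤ 1) (E : Set (DOmega n)) : 0 ≤ dPr p E :=
  Finset.sum_nonneg fun ω _ => Set.indicator_nonneg (fun x _ => dwt_nonneg h0 h1 x) ω

lemma dPr_mono {p : ℝ} (h0 : 0 ≤ p) (h1 : p ≤ 1) {E F : Set (DOmega n)} (h : E ⊆ F) :
    dPr p E ≤ dPr p F := by
  refine Finset.sum_le_sum fun ω _ => ?_
  classical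
  rw [Set.indicator_apply, Set.indicator_apply]
  by_cases hE : ω ∈ E
  · rw [if_pos hE, if_pos (h hE)]
  · rw [if_neg hE]
    split_ifs
    · exact dwt_nonneg h0 h1 ω
    · exact le_rfl

lemma dPr_union_le {p : ℝ} (h0 : 0 ≤ p) (h1 : p ≤ 1) (E F : Set (DOmega n)) :
    dPr p (E ∪ F) ≤ dPr p E + dPr p F := by
  unfold dPr
  rw [← Finset.sum_add_distrib]
  refine Finset.sum_le_sum fun ω _ => ?_
  classical
  rw [Set.indicator_apply, Set.indicator_apply, Set.indicator_apply]
  by_cases hE : ω ∈ E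
  · rw [if_pos hE, if_pos (Set.mem_union_left F hE)]
    have : (0:ℝ) ≤ if ω ∈ F then dwt p ω else 0 := by
      split_ifs
      · exact dwt_nonneg h0 h1 ω
      · exact le_rfl
    linarith
  · rw [if_neg hE, zero_add]
    by_cases hF : ω ∈ F
    · rw [if_pos hF, if_pos (Set.mem_union_right E hF)]
    · rw [if_neg hF, if_neg (show ω ∉ E ∪ F by rintro (h | h); exacts [hE h, hF h])]

lemma dPr_biUnion_le {p : ℝ} (h0 : 0 ≤ p) (h1 : p ≤ 1) (t : Finset (Fin n))
    (B : Fin n → Set (DOmega n)) :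
    dPr p (⋃ w ∈ t, B w) ≤ ∑ w ∈ t, dPr p (B w) := by
  classical
  induction t using Finset.induction with
  | empty =>
      simp only [Finset.notMem_empty, Set.iUnion_of_empty, Set.iUnion_empty,
        Finset.sum_empty]
      have : dPr (n := n) p ∅ = 0 := by
        unfold dPr
        simp
      rw [this]
  | @insert a t ha ih =>
      rw [Finset.sum_insert ha]
      have hset : (⋃ w ∈ insert a t, B w) = B a ∪ ⋃ w ∈ t, B w := by
        simp [Set.biUnion_insert]
      rw [hset]
      calc dPr p (B a ∪ ⋃ w ∈ t, B w) ≤ dPr p (B a) + dPr p (⋃ w ∈ t, B w) :=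
            dPr_union_le h0 h1 _ _
        _ ≤ dPr p (B a) + ∑ w ∈ t, dPr p (B w) := by linarith
end PrBasic

section Incl
variable {n : ℕ}

open Finset

lemma key_incl (v : Fin n) :
    dA n v ⊆ {ω | dSeymour ω v} ∪ ⋃ w ∈ Finset.univ.erase v, dB n v w := by
  intro ω hA
  classical
  by_cases hB : ω ∈ ⋃ w ∈ Finset.univ.erase v, dB n v w
  · exact Or.inr hB
  · left
    simp only [Set.mem_iUnion, not_exists] at hB
    have hsub : (Set.univ : Set (Fin n)) ⊆ ({v} : Set (Fin n)) ∪ dN1 ω v ∪ dN2 ω v := by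
      intro w _
      by_cases hw : w = v
      · exact Or.inl (Or.inl hw)
      · have hwB : ω ∉ dB n v w := hB w (Finset.mem_erase.2 ⟨hw, Finset.mem_univ w⟩)
        simp only [dB, Set.mem_setOf_eq, not_and, not_forall, not_not] at hwB
        by_cases hvw : ω v w = true
        · exact Or.inl (Or.inr ⟨fun h => hw h.symm, hvw⟩)
        · have hvw' : ω v w = false := by
            cases hbe : ω v w
            · rfl
            · exact absurd hbe hvw
          obtain ⟨x, hx1, hx2⟩ := hwB hvw'
          refine Or.inr ⟨hw, ?_, x, hx1, hx2⟩
          rintro ⟨-, hb⟩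
          exact hvw hb
    have hle := Set.ncard_le_ncard hsub (Set.toFinite _)
    rw [Set.ncard_univ, Nat.card_eq_fintype_card, Fintype.card_fin] at hle
    have h2 := Set.ncard_union_le (({v} : Set (Fin n)) ∪ dN1 ω v) (dN2 ω v)
    have h3 := Set.ncard_union_le ({v} : Set (Fin n)) (dN1 ω v)
    rw [Set.ncard_singleton] at h3
    have hA' : 2 * (dN1 ω v).ncard ≤ n - 1 := hA
    have hn1 : 1 ≤ n := by
      rcases Nat.eq_zero_or_pos n with h | h
      · exact absurd (h ▸ v).2 (by omega)
      · exact h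
    show (dN1 ω v).ncard ≤ (dN2 ω v).ncard
    omega

end Incl

section ES
variable {n : ℕ}

lemma dES_eq (p : ℝ) : dES n p = ∑ v : Fin n, dPr p {ω : DOmega n | dSeymour ω v} := by
  classical
  unfold dES dEx
  have hS : ∀ ω : DOmega n, ((dS ω : ℝ)) = ∑ v, if dSeymour ω v then (1:ℝ) else 0 := by
    intro ω
    unfold dS
    rw [Set.ncard_eq_toFinset_card', Set.toFinset_setOf, Finset.card_filter]
    push_cast
    refine Finset.sum_congr rfl fun v _ => ?_
    split_ifs <;> simp
  calc ∑ ω : DOmega n, dwt p ω * (dS ω : ℝ)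
      = ∑ ω : DOmega n, ∑ v, dwt p ω * (if dSeymour ω v then (1:ℝ) else 0) := by
        refine Finset.sum_congr rfl fun ω _ => ?_
        rw [hS ω, Finset.mul_sum]
    _ = ∑ v, ∑ ω : DOmega n, dwt p ω * (if dSeymour ω v then (1:ℝ) else 0) :=
        Finset.sum_comm
    _ = ∑ v : Fin n, dPr p {ω : DOmega n | dSeymour ω v} := by
        refine Finset.sum_congr rfl fun v _ => ?_
        unfold dPr
        refine Finset.sum_congr rfl fun ω _ => ?_
        rw [Set.indicator_apply]
        by_cases h : dSeymour ω v
        · rw [if_pos h, if_pos (show ω ∈ {ω : DOmega n | dSeymour ω v} from h), mul_one]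
        · rw [if_neg h, if_neg (show ω ∉ {ω : DOmega n | dSeymour ω v} from h), mul_zero]

end ES

/-- Lower bound on the expected number of Seymour vertices of the random digraph `D(n, p)`
with `n ≥ 2` and `0 < p < 1/2`:
`E(S_n) ≥ n · P(Bin(n−1, p) ≤ (n−1)/2) − n(n−1)·(1−p)·(1−p²)^(n−2)`. -/
theorem digraph_expected_seymour_lower (n : ℕ) (hn : 2 ≤ n) (p : ℝ)
    (hp0 : 0 < p) (hp : p < 1 / 2) :
    (n : ℝ) *
        (∑ k ∈ Finset.range n,
          if (k : ℝ) ≤ ((n : ℝ) - 1) / 2 then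
            ((n - 1).choose k : ℝ) * p ^ k * (1 - p) ^ (n - 1 - k)
          else 0)
      - (n : ℝ) * ((n : ℝ) - 1) * (1 - p) * (1 - p ^ 2) ^ (n - 2) ≤ dES n p := by
  have h0 : 0 ≤ p := le_of_lt hp0
  have h1 : p ≤ 1 := by linarith
  have hn1 : 1 ≤ n := by omega
  have hcast : ((n - 1 : ℕ) : ℝ) = (n : ℝ) - 1 := by
    rw [Nat.cast_sub hn1, Nat.cast_one]
  have hbin : ∀ v : Fin n, dPr p (dA n v)
      = ∑ k ∈ Finset.range n, if (k : ℝ) ≤ ((n : ℝ) - 1) / 2 then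
          ((n - 1).choose k : ℝ) * p ^ k * (1 - p) ^ (n - 1 - k) else 0 := by
    intro v
    rw [dPr_dA p v hn1]
    refine Finset.sum_congr rfl fun k _ => ?_
    have hiff : 2 * k ≤ n - 1 ↔ (k : ℝ) ≤ ((n : ℝ) - 1) / 2 := by
      rw [le_div_iff₀ (by norm_num : (0:ℝ) < 2), ← hcast]
      constructor
      · intro h
        calc (k:ℝ) * 2 = ((2 * k : ℕ) : ℝ) := by push_cast; ring
          _ ≤ ((n - 1 : ℕ) : ℝ) := by exact_mod_cast h
      · intro h
        have h2 : ((2 * k : ℕ) : ℝ) ≤ ((n - 1 : ℕ) : ℝ) := by push_cast; linarith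
        exact_mod_cast h2
    by_cases h : 2 * k ≤ n - 1
    · rw [if_pos h, if_pos (hiff.1 h)]
      ring
    · rw [if_neg h, if_neg (fun hc => h (hiff.2 hc))]
  have hver : ∀ v : Fin n,
      dPr p (dA n v) - ((n:ℝ) - 1) * ((1 - p) * (1 - p ^ 2) ^ (n - 2))
        ≤ dPr p {ω : DOmega n | dSeymour ω v} := by
    intro v
    have hincl := dPr_mono h0 h1 (key_incl v)
    have hun := dPr_union_le h0 h1 {ω : DOmega n | dSeymour ω v}
      (⋃ w ∈ Finset.univ.erase v, dB n v w)
    have hbi := dPr_biUnion_le h0 h1 (Finset.univ.erase v) (dB n v)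
    have hBsum : ∑ w ∈ Finset.univ.erase v, dPr p (dB n v w)
        = ((n:ℝ) - 1) * ((1 - p) * (1 - p ^ 2) ^ (n - 2)) := by
      have he : ∀ w ∈ Finset.univ.erase v, dPr p (dB n v w)
          = (1 - p) * (1 - p ^ 2) ^ (n - 2) := by
        intro w hw
        exact dPr_dB p v w (fun h => (Finset.mem_erase.1 hw).1 h.symm)
      rw [Finset.sum_congr rfl he, Finset.sum_const,
        Finset.card_erase_of_mem (Finset.mem_univ v), Finset.card_univ, Fintype.card_fin,
        nsmul_eq_mul, hcast]
    rw [← hBsum]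
    linarith
  have hfin := Finset.sum_le_sum (fun v (_ : v ∈ Finset.univ) => hver v)
  have hL : ∑ v : Fin n, (dPr p (dA n v) - ((n:ℝ) - 1) * ((1 - p) * (1 - p ^ 2) ^ (n - 2)))
      = (n : ℝ) * (∑ k ∈ Finset.range n, if (k : ℝ) ≤ ((n : ℝ) - 1) / 2 then
            ((n - 1).choose k : ℝ) * p ^ k * (1 - p) ^ (n - 1 - k) else 0)
        - (n : ℝ) * ((n : ℝ) - 1) * (1 - p) * (1 - p ^ 2) ^ (n - 2) := by
    rw [Finset.sum_sub_distrib, Finset.sum_congr rfl fun v _ => hbin v,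
      Finset.sum_const, Finset.sum_const, Finset.card_univ, Fintype.card_fin,
      nsmul_eq_mul, nsmul_eq_mul]
    ring
  rw [dES_eq p, ← hL]
  exact hfin
end
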